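/- arXiv:2501.03168 — 6 statements merged into one kernel-verified Lean document; each statement's English description precedes it below -/
import Mathlib

section
/- Fix a real number N > 1 and for k > 1 let C_{N,k} = (1/((N−1)k)) · [ (k−1)·Γ(Nk/(k−1)) / ( Γ(1/(k−1))·Γ((Nk−1)/(k−1)) ) ]^{k−1} denote the sharp constant in the Bliss inequality. Then k·C_{N,k} → (1/(N−1))·e^{1 + 1/2 + ⋯ + 1/(N−1)} as k → ∞ (for integer N ≥ 2, the exponent being the harmonic number H_{N−1}). -/
open Real Filter Finset Topology

/-- The sharp constant `C_{N,k}` in the Bliss inequality. -/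
noncomputable def CBliss (N k : ℝ) : ℝ :=
  (1 / ((N - 1) * k)) *
    ((k - 1) * Real.Gamma (N * k / (k - 1)) /
      (Real.Gamma (1 / (k - 1)) * Real.Gamma ((N * k - 1) / (k - 1)))) ^ (k - 1)

open Real Filter Finset Topology Finset



lemma Gamma_add_nat' (x : ℝ) (hx : 0 < x) (n : ℕ) :
    Real.Gamma (x + n) = (∏ i ∈ Finset.range n, (x + i)) * Real.Gamma x := by
  induction n with
  | zero => simp
  | succ n ih =>
    have hxn : x + (n : ℝ) ≠ 0 := by positivity
    have h : (x : ℝ) + ((n : ℕ) + 1 : ℕ) = (x + n) + 1 := by push_cast; ring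
    rw [h, Real.Gamma_add_one hxn, ih, Finset.prod_range_succ]
    ring

lemma A_eq_exp (N : ℕ) (hN : 2 ≤ N) (k : ℝ) (hk : 2 ≤ k) :
    (k - 1) * Real.Gamma ((N:ℝ) * k / (k - 1)) /
      (Real.Gamma (1 / (k - 1)) * Real.Gamma (((N:ℝ) * k - 1) / (k - 1)))
    = Real.exp ((∑ i ∈ Finset.range (N-1),
        (Real.log (1 + (i:ℝ) + (N:ℝ) * (1/(k-1))) - Real.log (1 + (i:ℝ) + ((N:ℝ)-1) * (1/(k-1)))))
      + Real.log (Real.Gamma (1 + (N:ℝ) * (1/(k-1)))) - Real.log (Real.Gamma (1 + ((N:ℝ)-1) * (1/(k-1))))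
      - Real.log (Real.Gamma (1 + 1 * (1/(k-1))))) := by
  have hN2 : (2:ℝ) ≤ (N:ℝ) := by exact_mod_cast hN
  have hk1 : (0:ℝ) < k - 1 := by linarith
  set ε : ℝ := 1/(k-1) with hεdef
  have hε : 0 < ε := by positivity
  have hεk : ε * (k-1) = 1 := by rw [hεdef]; field_simp
  have hNε : 0 < 1 + (N:ℝ) * ε := by nlinarith
  have hN1ε : 0 < 1 + ((N:ℝ)-1) * ε := by nlinarith
  have h1ε : 0 < 1 + ε := by linarith
  have hcast : (((N-1:ℕ)):ℝ) = (N:ℝ) - 1 := by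
    rw [Nat.cast_sub (by omega : 1 ≤ N), Nat.cast_one]
  -- rewrite the three Gamma arguments
  have e1 : (N:ℝ) * k / (k - 1) = (1 + (N:ℝ) * ε) + ((N-1:ℕ):ℝ) := by
    rw [hcast, hεdef]; field_simp; ring
  have e2 : ((N:ℝ) * k - 1) / (k - 1) = (1 + ((N:ℝ)-1) * ε) + ((N-1:ℕ):ℝ) := by
    rw [hcast, hεdef]; field_simp; ring
  have e3 : Real.Gamma (1 / (k - 1)) = (k - 1) * Real.Gamma (1 + ε) := by
    have h := Real.Gamma_add_one hε.ne'
    have hGε : Real.Gamma (1 + ε) = ε * Real.Gamma ε := by rw [add_comm]; exact h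
    rw [show (1:ℝ)/(k-1) = ε from rfl]
    rw [hGε]; rw [show (k-1) * (ε * Real.Gamma ε) = (ε * (k-1)) * Real.Gamma ε by ring, hεk, one_mul]
  rw [e1, e2, e3, Gamma_add_nat' _ hNε, Gamma_add_nat' _ hN1ε]
  -- compute exp of the RHS
  have hprodpos : ∀ (c : ℝ), 0 < c → ∀ i ∈ Finset.range (N-1), (0:ℝ) < 1 + (i:ℝ) + c := by
    intro c hc i _; positivity
  have hGa : 0 < Real.Gamma (1 + (N:ℝ)*ε) := Real.Gamma_pos_of_pos hNε
  have hGb : 0 < Real.Gamma (1 + ((N:ℝ)-1)*ε) := Real.Gamma_pos_of_pos hN1ε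
  have hGc : 0 < Real.Gamma (1 + 1*ε) := Real.Gamma_pos_of_pos (by linarith)
  have hterm : ∀ i ∈ Finset.range (N-1),
      Real.exp (Real.log (1 + (i:ℝ) + (N:ℝ)*ε) - Real.log (1 + (i:ℝ) + ((N:ℝ)-1)*ε))
      = (1 + (N:ℝ)*ε + (i:ℝ)) / (1 + ((N:ℝ)-1)*ε + (i:ℝ)) := by
    intro i _
    have hi : (0:ℝ) ≤ (i:ℝ) := Nat.cast_nonneg i
    have h1 : (0:ℝ) < 1 + (i:ℝ) + (N:ℝ)*ε := by nlinarith
    have h2 : (0:ℝ) < 1 + (i:ℝ) + ((N:ℝ)-1)*ε := by nlinarith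
    rw [Real.exp_sub, Real.exp_log h1, Real.exp_log h2]
    rw [show (1:ℝ) + (N:ℝ)*ε + (i:ℝ) = 1 + (i:ℝ) + (N:ℝ)*ε by ring,
        show (1:ℝ) + ((N:ℝ)-1)*ε + (i:ℝ) = 1 + (i:ℝ) + ((N:ℝ)-1)*ε by ring]
  rw [Real.exp_sub, Real.exp_sub, Real.exp_add, Real.exp_sum,
      Finset.prod_congr rfl hterm, Finset.prod_div_distrib,
      Real.exp_log hGa, Real.exp_log hGb, Real.exp_log hGc]
  have hPa : (0:ℝ) < ∏ i ∈ Finset.range (N-1), (1 + (N:ℝ)*ε + (i:ℝ)) :=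
    Finset.prod_pos (fun i _ => by positivity)
  have hPb : (0:ℝ) < ∏ i ∈ Finset.range (N-1), (1 + ((N:ℝ)-1)*ε + (i:ℝ)) :=
    Finset.prod_pos (fun i _ => by nlinarith [Nat.cast_nonneg (α := ℝ) i])
  rw [one_mul]
  field_simp


lemma hasDerivAt_log_affine (a c : ℝ) (ha : 0 < a) :
    HasDerivAt (fun ε : ℝ => Real.log (a + c * ε)) (c / a) 0 := by
  have hinner : HasDerivAt (fun ε : ℝ => a + c * ε) c 0 := by
    simpa using ((hasDerivAt_id (0:ℝ)).const_mul c).const_add a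
  have hlog : HasDerivAt Real.log (a + c*0)⁻¹ (a + c*0) :=
    Real.hasDerivAt_log (by simpa using ha.ne')
  have := hlog.comp 0 hinner
  simpa [Function.comp_def, div_eq_inv_mul] using this

lemma hasDerivAt_logGamma_affine (c : ℝ) :
    HasDerivAt (fun ε : ℝ => Real.log (Real.Gamma (1 + c * ε))) (deriv Real.Gamma 1 * c) 0 := by
  have h1 : ∀ m : ℕ, (1:ℝ) ≠ -m := by
    intro m h; have := Nat.cast_nonneg (α := ℝ) m; linarith
  have hΓ : HasDerivAt Real.Gamma (deriv Real.Gamma 1) (1 + c * 0) := by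
    simpa using (Real.differentiableAt_Gamma h1).hasDerivAt
  have hinner : HasDerivAt (fun ε : ℝ => 1 + c * ε) c 0 := by
    simpa using ((hasDerivAt_id (0:ℝ)).const_mul c).const_add 1
  have hcomp := hΓ.comp 0 hinner
  have hlog : HasDerivAt Real.log (Real.Gamma (1 + c*0))⁻¹ (Real.Gamma (1 + c*0)) :=
    Real.hasDerivAt_log (by simp [Real.Gamma_one])
  have := hlog.comp 0 hcomp
  simpa [Function.comp_def, Real.Gamma_one] using this

lemma hasDerivAt_F (N : ℕ) (hN : 2 ≤ N) :
    HasDerivAt (fun ε : ℝ =>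
      (∑ i ∈ Finset.range (N-1),
        (Real.log (1 + (i:ℝ) + (N:ℝ) * ε) - Real.log (1 + (i:ℝ) + ((N:ℝ)-1) * ε)))
      + Real.log (Real.Gamma (1 + (N:ℝ) * ε)) - Real.log (Real.Gamma (1 + ((N:ℝ)-1) * ε))
      - Real.log (Real.Gamma (1 + 1 * ε)))
      (∑ i ∈ Finset.range (N-1), (1:ℝ)/(i+1)) 0 := by
  set g := deriv Real.Gamma 1
  have hsumD : HasDerivAt (fun ε : ℝ => ∑ i ∈ Finset.range (N-1),
      (Real.log (1 + (i:ℝ) + (N:ℝ) * ε) - Real.log (1 + (i:ℝ) + ((N:ℝ)-1) * ε)))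
      (∑ i ∈ Finset.range (N-1), ((N:ℝ)/(1+i) - ((N:ℝ)-1)/(1+i))) 0 := by
    apply HasDerivAt.fun_sum
    intro i _
    have hpos : (0:ℝ) < 1 + i := by positivity
    exact (hasDerivAt_log_affine _ _ hpos).sub (hasDerivAt_log_affine _ _ hpos)
  have hA := hasDerivAt_logGamma_affine (N:ℝ)
  have hB := hasDerivAt_logGamma_affine ((N:ℝ)-1)
  have hC := hasDerivAt_logGamma_affine (1:ℝ)
  have htot := ((hsumD.add hA).sub hB).sub hC
  have hsum : ∑ i ∈ Finset.range (N-1), ((N:ℝ)/(1+i) - ((N:ℝ)-1)/(1+i))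
      = ∑ i ∈ Finset.range (N-1), (1:ℝ)/(i+1) := by
    refine Finset.sum_congr rfl (fun i _ => ?_)
    have hpos : (0:ℝ) < 1 + i := by positivity
    field_simp
    ring
  rw [show (∑ i ∈ Finset.range (N-1), ((N:ℝ)/(1+i) - ((N:ℝ)-1)/(1+i)))
      + g * N - g * ((N:ℝ)-1) - g * 1 = ∑ i ∈ Finset.range (N-1), (1:ℝ)/(i+1) by
    rw [hsum]; ring] at htot
  exact htot

/-- for an integer `N ≥ 2`,
`k · C_{N,k} → (1/(N-1)) · e^{1 + 1/2 + ⋯ + 1/(N-1)}` as `k → ∞`. -/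
theorem CBliss_mul_tendsto (N : ℕ) (hN : 2 ≤ N) :
    Filter.Tendsto (fun k : ℝ => k * CBliss (N : ℝ) k) Filter.atTop
      (nhds ((1 / ((N : ℝ) - 1)) *
        Real.exp (∑ i ∈ Finset.range (N - 1), (1 : ℝ) / (i + 1)))) := by
  have hN2 : (2:ℝ) ≤ (N:ℝ) := by exact_mod_cast hN
  set H : ℝ := ∑ i ∈ Finset.range (N-1), (1:ℝ)/(i+1) with hH
  set F : ℝ → ℝ := fun ε =>
      (∑ i ∈ Finset.range (N-1),
        (Real.log (1 + (i:ℝ) + (N:ℝ) * ε) - Real.log (1 + (i:ℝ) + ((N:ℝ)-1) * ε)))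
      + Real.log (Real.Gamma (1 + (N:ℝ) * ε)) - Real.log (Real.Gamma (1 + ((N:ℝ)-1) * ε))
      - Real.log (Real.Gamma (1 + 1 * ε)) with hFdef
  have hF0 : F 0 = 0 := by simp [hFdef, Real.Gamma_one]
  have hFd : HasDerivAt F H 0 := hasDerivAt_F N hN
  have hslope : Tendsto (fun ε => F ε / ε) (𝓝[≠] (0:ℝ)) (𝓝 H) := by
    have h := hasDerivAt_iff_tendsto_slope.mp hFd
    refine Tendsto.congr (fun ε => ?_) h
    rw [slope_def_field, hF0, sub_zero, sub_zero]
  have hεk : Tendsto (fun k : ℝ => 1/(k-1)) atTop (𝓝[≠] (0:ℝ)) := by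
    rw [tendsto_nhdsWithin_iff]
    constructor
    · have h : Tendsto (fun k : ℝ => k - 1) atTop atTop :=
        tendsto_atTop_add_const_right atTop (-1) tendsto_id
      have h2 := h.inv_tendsto_atTop
      simpa [one_div, Pi.inv_def] using h2
    · filter_upwards [eventually_ge_atTop (2:ℝ)] with k hk
      have hk1 : (0:ℝ) < k - 1 := by linarith
      have : (0:ℝ) < 1/(k-1) := by positivity
      simpa using this.ne'
  have hcomp : Tendsto (fun k : ℝ => F (1/(k-1)) / (1/(k-1))) atTop (𝓝 H) := hslope.comp hεk
  have hmain : Tendsto (fun k : ℝ => (1/((N:ℝ)-1)) * Real.exp (F (1/(k-1)) / (1/(k-1))))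
      atTop (𝓝 ((1/((N:ℝ)-1)) * Real.exp H)) :=
    ((Real.continuous_exp.tendsto H).comp hcomp).const_mul _
  refine Tendsto.congr' ?_ hmain
  filter_upwards [eventually_ge_atTop (2:ℝ)] with k hk
  have hk1 : (0:ℝ) < k - 1 := by linarith
  have hk0 : (0:ℝ) < k := by linarith
  have hN1 : (0:ℝ) < (N:ℝ) - 1 := by linarith
  have hA := A_eq_exp N hN k hk
  have hFε : F (1/(k-1)) = (∑ i ∈ Finset.range (N-1),
        (Real.log (1 + (i:ℝ) + (N:ℝ) * (1/(k-1))) - Real.log (1 + (i:ℝ) + ((N:ℝ)-1) * (1/(k-1)))))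
      + Real.log (Real.Gamma (1 + (N:ℝ) * (1/(k-1)))) - Real.log (Real.Gamma (1 + ((N:ℝ)-1) * (1/(k-1))))
      - Real.log (Real.Gamma (1 + 1 * (1/(k-1)))) := rfl
  rw [← hFε] at hA
  unfold CBliss
  rw [hA]
  have hdiv : F (1/(k-1)) / (1/(k-1)) = F (1/(k-1)) * (k-1) := by field_simp
  have hr : (Real.exp (F (1/(k-1)))) ^ (k-1) = Real.exp (F (1/(k-1)) * (k-1)) := by
    rw [Real.rpow_def_of_pos (Real.exp_pos _), Real.log_exp]
  rw [hdiv, hr]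
  field_simp
end

section
/- Let N ≥ 2 be an integer and 0 < β < 1. Then sup_{v ∈ E_N} ∫₀¹ exp( β · log(e/s) · v(s)^N / s^{N−1} ) ds < ∞; i.e. there is a constant C(N,β) such that ∫₀¹ e^{β (log(e/s)) v^N(s)/s^{N−1}} ds ≤ C(N,β) for all v ∈ E_N (Limiting-Bliss inequality in the subcritical range, proved via termwise application of the Bliss inequalities to the Taylor expansion of the exponential). -/
open MeasureTheory Real Set Filter

lemma holder_aux (N : ℕ) (hN : 2 ≤ N) (g : ℝ → ℝ) (s : ℝ) (hs0 : 0 < s) (hs1 : s ≤ 1)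
    (hgi : IntervalIntegrable g volume 0 1)
    (hgN : IntegrableOn (fun t => |g t| ^ N) (Set.Ioc (0:ℝ) 1))
    (hg1 : (∫ t in Set.Ioc (0:ℝ) 1, |g t| ^ N) = 1) :
    (∫ t in Set.Ioc (0:ℝ) s, |g t|) ≤ s ^ (1 - 1/(N:ℝ)) := by
  have hN1 : (1:ℝ) < N := by exact_mod_cast hN.trans_lt' one_lt_two
  have hNpos : (0:ℝ) < N := by linarith
  set μs := volume.restrict (Set.Ioc (0:ℝ) s) with hμs
  have hsub : Set.Ioc (0:ℝ) s ⊆ Set.Ioc (0:ℝ) 1 := Set.Ioc_subset_Ioc le_rfl hs1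
  have hpq : (N:ℝ).HolderConjugate (Real.conjExponent N) := Real.HolderConjugate.conjExponent hN1
  -- measurability of g on the small set
  have hgm : AEStronglyMeasurable g μs :=
    (hgi.1.mono_set hsub).aestronglyMeasurable
  -- Memℒp of |g|
  have hrpow : (fun t => ‖g t‖ ^ ((ENNReal.ofReal (N:ℝ)).toReal)) = fun t => |g t| ^ N := by
    funext t
    rw [ENNReal.toReal_ofReal hNpos.le, Real.norm_eq_abs, Real.rpow_natCast]
  have hmem1 : MemLp (fun t => ‖g t‖ ^ ((ENNReal.ofReal (N:ℝ)).toReal)) 1 μs := by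
    rw [hrpow, memLp_one_iff_integrable]
    exact hgN.mono_set hsub
  have hmemg : MemLp g (ENNReal.ofReal (N:ℝ)) μs := by
    have := (memLp_norm_rpow_iff (q := ENNReal.ofReal (N:ℝ)) (p := ENNReal.ofReal (N:ℝ)) hgm
      (by simpa using (by omega : N ≠ 0)) (by simp)).mp ?_
    · exact this
    · rwa [ENNReal.div_self (by simpa using (by omega : N ≠ 0)) (by simp)]
  have hmemabs : MemLp (fun t => |g t|) (ENNReal.ofReal (N:ℝ)) μs := by
    simpa [Real.norm_eq_abs] using hmemg.norm
  have hmemone : MemLp (fun _ : ℝ => (1:ℝ)) (ENNReal.ofReal (Real.conjExponent N)) μs :=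
    memLp_const 1
  have hH := integral_mul_le_Lp_mul_Lq_of_nonneg (μ := μs) hpq
    (ae_of_all _ fun t => abs_nonneg (g t)) (ae_of_all _ fun _ => zero_le_one) hmemabs hmemone
  simp only [mul_one] at hH
  -- compute the two factors
  have hfac2 : (∫ t, (1:ℝ) ^ (Real.conjExponent N) ∂μs) = s := by
    simp [hμs, Real.one_rpow, Real.volume_Ioc, hs0.le, ENNReal.toReal_ofReal]
  have hfac1le : (∫ t, |g t| ^ (N:ℝ) ∂μs) ≤ 1 := by
    have : (∫ t, |g t| ^ (N:ℝ) ∂μs) = ∫ t in Set.Ioc (0:ℝ) s, |g t| ^ N := by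
      simp [hμs, Real.rpow_natCast]
    rw [this, ← hg1]
    exact setIntegral_mono_set hgN (ae_of_all _ fun t => by positivity)
      (HasSubset.Subset.eventuallyLE hsub)
  have hfac1 : (∫ t, |g t| ^ (N:ℝ) ∂μs) ^ (1/(N:ℝ)) ≤ 1 :=
    Real.rpow_le_one (integral_nonneg fun t => by positivity) hfac1le (by positivity)
  have hq : 1 / Real.conjExponent N = 1 - 1/(N:ℝ) := by
    have := hpq.inv_add_inv_eq_one
    simp only [one_div] at this ⊢
    linarith
  calc (∫ t in Set.Ioc (0:ℝ) s, |g t|) = ∫ t, |g t| ∂μs := rfl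
    _ ≤ (∫ t, |g t| ^ (N:ℝ) ∂μs) ^ (1/(N:ℝ)) *
        (∫ t, (1:ℝ) ^ (Real.conjExponent N) ∂μs) ^ (1/Real.conjExponent N) := hH
    _ ≤ 1 * s ^ (1 - 1/(N:ℝ)) := by
        rw [hfac2, hq]
        exact mul_le_mul_of_nonneg_right hfac1 (Real.rpow_nonneg hs0.le _)
    _ = s ^ (1 - 1/(N:ℝ)) := one_mul _

lemma pointwise_aux (N : ℕ) (hN : 2 ≤ N) (β : ℝ) (hβ0 : 0 < β) (u g : ℝ → ℝ)
    (hu : ∀ s ∈ Set.Icc (0:ℝ) 1, u s = ∫ t in (0:ℝ)..s, g t)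
    (hgi : IntervalIntegrable g volume 0 1)
    (hgN : IntegrableOn (fun t => |g t| ^ N) (Set.Ioc (0:ℝ) 1))
    (hg1 : (∫ t in Set.Ioc (0:ℝ) 1, |g t| ^ N) = 1)
    (s : ℝ) (hs : s ∈ Set.Ioc (0:ℝ) 1) :
    Real.exp (β * Real.log (Real.exp 1 / s) * (u s ^ N / s ^ (N - 1))) ≤
      Real.exp 1 ^ β * s ^ (-β) := by
  obtain ⟨hs0, hs1⟩ := hs
  have hNpos : (0:ℝ) < N := by positivity
  have hNne : (N:ℝ) ≠ 0 := ne_of_gt hNpos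
  -- |u s| ≤ s ^ (1 - 1/N)
  have habs : |u s| ≤ s ^ (1 - 1/(N:ℝ)) := by
    rw [hu s ⟨hs0.le, hs1⟩, intervalIntegral.integral_of_le hs0.le]
    calc |∫ t in Set.Ioc (0:ℝ) s, g t| ≤ ∫ t in Set.Ioc (0:ℝ) s, |g t| := by
          simpa [Real.norm_eq_abs] using
            norm_integral_le_integral_norm (μ := volume.restrict (Set.Ioc (0:ℝ) s)) g
      _ ≤ s ^ (1 - 1/(N:ℝ)) := holder_aux N hN g s hs0 hs1 hgi hgN hg1
  -- u s ^ N / s ^ (N-1) ≤ 1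
  have hcast : ((N - 1 : ℕ) : ℝ) = (N:ℝ) - 1 := by
    have : 1 ≤ N := by omega
    push_cast [this]; ring
  have hpow : u s ^ N ≤ s ^ (N - 1) := by
    calc u s ^ N ≤ |u s ^ N| := le_abs_self _
      _ = |u s| ^ N := abs_pow _ _
      _ ≤ (s ^ (1 - 1/(N:ℝ))) ^ N := pow_le_pow_left₀ (abs_nonneg _) habs N
      _ = s ^ (N - 1) := by
          rw [← Real.rpow_natCast (s ^ (1 - 1/(N:ℝ))) N, ← Real.rpow_mul hs0.le,
            ← Real.rpow_natCast s (N - 1), hcast]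
          congr 1
          field_simp
  have hratio : u s ^ N / s ^ (N - 1) ≤ 1 :=
    (div_le_one (pow_pos hs0 _)).mpr hpow
  have hlog : 0 ≤ Real.log (Real.exp 1 / s) :=
    Real.log_nonneg (by rw [le_div_iff₀ hs0]; nlinarith [Real.exp_one_gt_d9])
  have h1 : β * Real.log (Real.exp 1 / s) * (u s ^ N / s ^ (N - 1)) ≤
      β * Real.log (Real.exp 1 / s) :=
    mul_le_of_le_one_right (by positivity) hratio
  calc Real.exp (β * Real.log (Real.exp 1 / s) * (u s ^ N / s ^ (N - 1)))
      ≤ Real.exp (β * Real.log (Real.exp 1 / s)) := Real.exp_le_exp.mpr h1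
    _ = Real.exp 1 ^ β * s ^ (-β) := by
        rw [Real.log_div (Real.exp_ne_zero 1) (ne_of_gt hs0), Real.log_exp,
          Real.rpow_def_of_pos hs0, Real.exp_one_rpow, ← Real.exp_add]
        ring_nf

/-- `u` belongs to `E_N` with weak derivative `g`. -/
def MemEN (N : ℕ) (u g : ℝ → ℝ) : Prop :=
  (∀ s ∈ Set.Icc (0:ℝ) 1, u s = ∫ t in (0:ℝ)..s, g t) ∧
  u 0 = 0 ∧
  IntervalIntegrable g MeasureTheory.volume 0 1 ∧
  MeasureTheory.IntegrableOn (fun t => |g t| ^ N) (Set.Ioc (0:ℝ) 1) ∧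
  (∫ t in Set.Ioc (0:ℝ) 1, |g t| ^ N) = 1

/-- the subcritical Limiting-Bliss inequality: for `0 < β < 1` there is a
constant `C = C(N, β)` with `∫₀¹ e^{β log(e/s) v(s)^N / s^{N-1}} ds ≤ C` for all `v ∈ E_N`. -/
theorem limiting_bliss_subcritical (N : ℕ) (hN : 2 ≤ N) (β : ℝ) (hβ0 : 0 < β) (hβ1 : β < 1) :
    ∃ C : ℝ, ∀ u g : ℝ → ℝ, MemEN N u g →
      (∫ s in Set.Ioc (0:ℝ) 1,
        Real.exp (β * Real.log (Real.exp 1 / s) * (u s ^ N / s ^ (N - 1)))) ≤ C := by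
  refine ⟨∫ s in Set.Ioc (0:ℝ) 1, Real.exp 1 ^ β * s ^ (-β), ?_⟩
  rintro u g ⟨hu, -, hgi, hgN, hg1⟩
  -- integrability of the bound
  have hbint : IntegrableOn (fun s : ℝ => Real.exp 1 ^ β * s ^ (-β)) (Set.Ioc (0:ℝ) 1) := by
    have h1 : IntervalIntegrable (fun s : ℝ => s ^ (-β)) volume 0 1 :=
      intervalIntegral.intervalIntegrable_rpow' (by linarith)
    exact (h1.1).const_mul _
  -- measurability of the integrand
  have hcontF : ContinuousOn (fun s => ∫ t in (0:ℝ)..s, g t) (Set.Icc (0:ℝ) 1) := by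
    have := intervalIntegral.continuousOn_primitive_interval' hgi
      (by simp [Set.uIcc_of_le (zero_le_one (α := ℝ))] : (0:ℝ) ∈ Set.uIcc (0:ℝ) 1)
    simpa [Set.uIcc_of_le (zero_le_one (α := ℝ))] using this
  have hcontf : ContinuousOn (fun s : ℝ =>
      Real.exp (β * Real.log (Real.exp 1 / s) * (u s ^ N / s ^ (N - 1)))) (Set.Ioc (0:ℝ) 1) := by
    have hinner : ContinuousOn (fun s : ℝ =>
        β * Real.log (Real.exp 1 / s) * ((∫ t in (0:ℝ)..s, g t) ^ N / s ^ (N - 1)))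
        (Set.Ioc (0:ℝ) 1) := by
      apply ContinuousOn.mul
      · exact continuousOn_const.mul (ContinuousOn.log
          (continuousOn_const.div continuousOn_id fun x hx => ne_of_gt hx.1)
          fun x hx => div_ne_zero (Real.exp_ne_zero 1) (ne_of_gt hx.1))
      · exact ((hcontF.mono Set.Ioc_subset_Icc_self).pow N).div
          (continuousOn_id.pow (N - 1)) fun x hx => pow_ne_zero _ (ne_of_gt hx.1)
    have : ContinuousOn (fun s : ℝ =>
        Real.exp (β * Real.log (Real.exp 1 / s) * ((∫ t in (0:ℝ)..s, g t) ^ N / s ^ (N - 1))))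
        (Set.Ioc (0:ℝ) 1) := Real.continuous_exp.comp_continuousOn hinner
    exact this.congr fun x hx => by rw [hu x (Set.Ioc_subset_Icc_self hx)]
  have hfmeas : AEStronglyMeasurable (fun s : ℝ =>
      Real.exp (β * Real.log (Real.exp 1 / s) * (u s ^ N / s ^ (N - 1))))
      (volume.restrict (Set.Ioc (0:ℝ) 1)) :=
    hcontf.aestronglyMeasurable measurableSet_Ioc
  have hptwise : ∀ s ∈ Set.Ioc (0:ℝ) 1,
      Real.exp (β * Real.log (Real.exp 1 / s) * (u s ^ N / s ^ (N - 1))) ≤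
        Real.exp 1 ^ β * s ^ (-β) :=
    fun s hs => pointwise_aux N hN β hβ0 u g hu hgi hgN hg1 s hs
  have hfint : IntegrableOn (fun s : ℝ =>
      Real.exp (β * Real.log (Real.exp 1 / s) * (u s ^ N / s ^ (N - 1)))) (Set.Ioc (0:ℝ) 1) := by
    refine hbint.mono' hfmeas ?_
    rw [ae_restrict_iff' measurableSet_Ioc]
    exact ae_of_all _ fun s hs => by
      rw [Real.norm_eq_abs, abs_of_pos (Real.exp_pos _)]
      exact hptwise s hs
  exact setIntegral_mono_on hfint hbint measurableSet_Ioc hptwise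
end

section
/- Let N ≥ 2 be an integer and β > 1. Then sup_{v ∈ E_N} ∫₀¹ exp( β · log(e/s) · v(s)^N / s^{N−1} ) ds = +∞; more precisely, with β = 1 + δ, δ > 0, for the infinitesimal Moser sequence w_j one has ∫₀¹ e^{β (log(e/s)) w_j^N(s)/s^{N−1}} ds ≥ (e^{1+δ}/(1+δ)) · j^δ/log(je) − (1/(j(1+δ)log(je))) → +∞ as j → ∞. -/
open MeasureTheory Real Set Filter

/-- The Limiting-Bliss functional `I_β`. -/
noncomputable def Ifun (N : ℕ) (β : ℝ) (v : ℝ → ℝ) : ℝ :=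
  ∫ s in Set.Ioc (0:ℝ) 1,
    Real.exp (β * Real.log (Real.exp 1 / s) * (v s ^ N / s ^ (N - 1)))

/-- The infinitesimal Moser sequence `w_j`. -/
noncomputable def moser (N j : ℕ) (t : ℝ) : ℝ :=
  if t ≤ 1 / (j : ℝ) then (j : ℝ) ^ ((1:ℝ) / N) * t
  else (j : ℝ) ^ (-(((N:ℝ) - 1) / N))

/- ### Auxiliary lemmas -/

lemma moser_left (N j : ℕ) {t : ℝ} (ht : t ≤ 1/(j:ℝ)) :
    moser N j t = (j:ℝ) ^ ((1:ℝ)/N) * t := if_pos ht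

lemma moser_right (N j : ℕ) {t : ℝ} (ht : ¬ t ≤ 1/(j:ℝ)) :
    moser N j t = (j:ℝ) ^ (-(((N:ℝ) - 1) / N)) := if_neg ht

lemma measurable_moser (N j : ℕ) : Measurable (moser N j) := by
  unfold moser
  exact Measurable.ite (measurableSet_le measurable_id measurable_const)
    (measurable_const.mul measurable_id) measurable_const

lemma c0_pow (N j : ℕ) (hN : 2 ≤ N) (hj : 1 ≤ j) :
    ((j:ℝ) ^ ((1:ℝ)/N)) ^ N = (j:ℝ) := by
  have hj0 : (0:ℝ) ≤ j := Nat.cast_nonneg j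
  rw [← Real.rpow_natCast ((j:ℝ) ^ ((1:ℝ)/N)) N, ← Real.rpow_mul hj0]
  rw [one_div, inv_mul_cancel₀ (by positivity : ((N:ℝ)) ≠ 0), Real.rpow_one]

/-- On the left piece, the Moser quotient is `j * s`. -/
lemma moser_quot_left (N j : ℕ) (hN : 2 ≤ N) (hj : 1 ≤ j) {s : ℝ} (hs0 : 0 < s)
    (hsle : s ≤ 1/(j:ℝ)) :
    moser N j s ^ N / s ^ (N - 1) = (j:ℝ) * s := by
  rw [moser_left N j hsle, mul_pow, c0_pow N j hN hj]
  have hsN : s ^ N = s ^ (N-1) * s := by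
    rw [← pow_succ]; congr 1; omega
  rw [hsN]
  field_simp

/-- On the right piece, the Moser quotient is at most `1`. -/
lemma moser_quot_right (N j : ℕ) (hN : 2 ≤ N) (hj : 1 ≤ j) {s : ℝ} (hs0 : 0 < s)
    (hsgt : ¬ s ≤ 1/(j:ℝ)) :
    0 ≤ moser N j s ^ N / s ^ (N - 1) ∧ moser N j s ^ N / s ^ (N - 1) ≤ 1 := by
  have hj0 : (0:ℝ) < j := by exact_mod_cast Nat.pos_of_ne_zero (by omega)
  have hpow : moser N j s ^ N = ((j:ℝ) ^ (N-1 : ℕ))⁻¹ := by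
    rw [moser_right N j hsgt, ← Real.rpow_natCast ((j:ℝ)) (N-1),
      ← Real.rpow_natCast _ N, ← Real.rpow_mul hj0.le, ← Real.rpow_neg hj0.le]
    congr 1
    have : ((N - 1 : ℕ) : ℝ) = (N:ℝ) - 1 := by
      have : (1:ℕ) ≤ N := by omega
      push_cast [Nat.cast_sub this]; ring
    rw [this]
    field_simp
  have hsgt' : 1/(j:ℝ) < s := lt_of_not_ge hsgt
  have hsp : (0:ℝ) < s ^ (N-1) := pow_pos hs0 _
  constructor
  · apply div_nonneg _ hsp.le
    rw [hpow]; positivity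
  · rw [div_le_one hsp, hpow]
    calc ((j:ℝ) ^ (N-1 : ℕ))⁻¹ = (1/(j:ℝ)) ^ (N-1 : ℕ) := by
          rw [one_div, inv_pow]
      _ ≤ s ^ (N-1) := pow_le_pow_left₀ (by positivity) hsgt'.le _

lemma log_e_div (s : ℝ) (hs : 0 < s) :
    Real.log (Real.exp 1 / s) = 1 - Real.log s := by
  rw [Real.log_div (Real.exp_ne_zero 1) hs.ne', Real.log_exp]

/-- The key elementary inequality `s (1 - log s) ≤ 1` for `0 < s`. -/
lemma s_one_sub_log_le (s : ℝ) (hs : 0 < s) : s * (1 - Real.log s) ≤ 1 := by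
  have h := Real.log_le_sub_one_of_pos (show (0:ℝ) < 1/s by positivity)
  rw [one_div, Real.log_inv] at h
  have h2 : s * (-Real.log s) ≤ s * (s⁻¹ - 1) := mul_le_mul_of_nonneg_left h hs.le
  have h3 : s * s⁻¹ = 1 := mul_inv_cancel₀ hs.ne'
  nlinarith

/-- Uniform exponent bound on `(0,1]`. -/
lemma exponent_le (N j : ℕ) (hN : 2 ≤ N) (hj : 1 ≤ j) (δ : ℝ) (hδ : 0 < δ)
    {s : ℝ} (hs : s ∈ Set.Ioc (0:ℝ) 1) :
    (1+δ) * Real.log (Real.exp 1 / s) * (moser N j s ^ N / s ^ (N - 1)) ≤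
      (1+δ) * ((j:ℝ) + (1 + Real.log j)) := by
  have hj0 : (0:ℝ) < j := by exact_mod_cast Nat.pos_of_ne_zero (by omega)
  have hj1 : (1:ℝ) ≤ j := by exact_mod_cast hj
  have hlogj : 0 ≤ Real.log j := Real.log_nonneg hj1
  have hβ : (0:ℝ) < 1 + δ := by linarith
  have hls : Real.log s ≤ 0 := Real.log_nonpos hs.1.le hs.2
  rw [log_e_div s hs.1]
  by_cases hc : s ≤ 1/(j:ℝ)
  · rw [moser_quot_left N j hN hj hs.1 hc]
    have hkey := s_one_sub_log_le s hs.1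
    have h1 : (1 - Real.log s) * ((j:ℝ) * s) ≤ (j:ℝ) := by
      have : (1 - Real.log s) * ((j:ℝ) * s) = (j:ℝ) * (s * (1 - Real.log s)) := by ring
      rw [this]
      calc (j:ℝ) * (s * (1 - Real.log s)) ≤ (j:ℝ) * 1 :=
            mul_le_mul_of_nonneg_left hkey hj0.le
        _ = (j:ℝ) := mul_one _
    calc (1+δ) * (1 - Real.log s) * ((j:ℝ) * s)
        = (1+δ) * ((1 - Real.log s) * ((j:ℝ) * s)) := by ring
      _ ≤ (1+δ) * (j:ℝ) := mul_le_mul_of_nonneg_left h1 hβ.le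
      _ ≤ (1+δ) * ((j:ℝ) + (1 + Real.log j)) := by nlinarith
  · obtain ⟨hq0, hq1⟩ := moser_quot_right N j hN hj hs.1 hc
    have hsgt : 1/(j:ℝ) < s := lt_of_not_ge hc
    have hlogs : -Real.log j ≤ Real.log s := by
      have := Real.log_le_log (by positivity : (0:ℝ) < 1/(j:ℝ)) hsgt.le
      rwa [one_div, Real.log_inv] at this
    have h1 : 1 - Real.log s ≤ 1 + Real.log j := by linarith
    have h0 : 0 ≤ 1 - Real.log s := by linarith
    calc (1+δ) * (1 - Real.log s) * (moser N j s ^ N / s ^ (N - 1))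
        ≤ (1+δ) * (1 - Real.log s) * 1 := by
          apply mul_le_mul_of_nonneg_left hq1; positivity
      _ = (1+δ) * (1 - Real.log s) := mul_one _
      _ ≤ (1+δ) * (1 + Real.log j) := mul_le_mul_of_nonneg_left h1 hβ.le
      _ ≤ (1+δ) * ((j:ℝ) + (1 + Real.log j)) := by nlinarith

lemma integrand_measurable (N j : ℕ) (δ : ℝ) :
    Measurable (fun s : ℝ => Real.exp ((1+δ) * Real.log (Real.exp 1 / s) *
      (moser N j s ^ N / s ^ (N - 1)))) := by
  apply Measurable.exp
  apply Measurable.mul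
  · exact measurable_const.mul (Real.measurable_log.comp (measurable_const.div measurable_id))
  · exact ((measurable_moser N j).pow_const N).div (measurable_id.pow_const (N-1))

lemma integrand_integrable (N j : ℕ) (hN : 2 ≤ N) (hj : 1 ≤ j) (δ : ℝ) (hδ : 0 < δ) :
    MeasureTheory.IntegrableOn (fun s : ℝ => Real.exp ((1+δ) * Real.log (Real.exp 1 / s) *
      (moser N j s ^ N / s ^ (N - 1)))) (Set.Ioc (0:ℝ) 1) := by
  have hconst : MeasureTheory.IntegrableOn (fun _ : ℝ =>
      Real.exp ((1+δ) * ((j:ℝ) + (1 + Real.log j)))) (Set.Ioc (0:ℝ) 1) volume :=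
    integrableOn_const measure_Ioc_lt_top.ne
  refine hconst.mono' (integrand_measurable N j δ).aestronglyMeasurable ?_
  rw [ae_restrict_iff' measurableSet_Ioc]
  filter_upwards with s hs
  rw [Real.norm_eq_abs, abs_of_pos (Real.exp_pos _)]
  exact Real.exp_le_exp.mpr (exponent_le N j hN hj δ hδ hs)

/-- The explicit lower bound (part 1). -/
lemma main_bound (N : ℕ) (hN : 2 ≤ N) (δ : ℝ) (hδ : 0 < δ) (j : ℕ) (hj : 1 ≤ j) :
    Real.exp (1 + δ) / (1 + δ) * ((j : ℝ) ^ δ / Real.log ((j : ℝ) * Real.exp 1)) -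
        1 / ((j : ℝ) * ((1 + δ) * Real.log ((j : ℝ) * Real.exp 1))) ≤
        Ifun N (1 + δ) (moser N j) := by
  have hj0 : (0:ℝ) < j := by exact_mod_cast Nat.pos_of_ne_zero (by omega)
  have hj1 : (1:ℝ) ≤ j := by exact_mod_cast hj
  have hlogj : 0 ≤ Real.log j := Real.log_nonneg hj1
  have hβ : (0:ℝ) < 1 + δ := by linarith
  set c : ℝ := (1+δ) * (1 + Real.log j) * j with hc
  have hcpos : 0 < c := by positivity
  set f : ℝ → ℝ := fun s => Real.exp ((1+δ) * Real.log (Real.exp 1 / s) *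
      (moser N j s ^ N / s ^ (N - 1))) with hf
  have hIfun : Ifun N (1 + δ) (moser N j) = ∫ s in Set.Ioc (0:ℝ) 1, f s := rfl
  have hsub : Set.Ioc (0:ℝ) (1/(j:ℝ)) ⊆ Set.Ioc (0:ℝ) 1 :=
    Set.Ioc_subset_Ioc_right (by rw [div_le_one hj0]; exact hj1)
  have hfint : MeasureTheory.IntegrableOn f (Set.Ioc (0:ℝ) 1) :=
    integrand_integrable N j hN hj δ hδ
  -- pointwise bound on the left piece
  have hpt : ∀ s ∈ Set.Ioc (0:ℝ) (1/(j:ℝ)), Real.exp (c * s) ≤ f s := by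
    intro s hs
    have hs0 : 0 < s := hs.1
    apply Real.exp_le_exp.mpr
    show c * s ≤ (1+δ) * Real.log (Real.exp 1 / s) * (moser N j s ^ N / s ^ (N - 1))
    rw [log_e_div s hs0, moser_quot_left N j hN hj hs0 hs.2]
    have hlogs : Real.log s ≤ -Real.log j := by
      have := Real.log_le_log hs0 hs.2
      rwa [one_div, Real.log_inv] at this
    have h1 : 1 + Real.log j ≤ 1 - Real.log s := by linarith
    have hjs : 0 ≤ (j:ℝ) * s := by positivity
    calc c * s = (1 + Real.log j) * ((1+δ) * ((j:ℝ) * s)) := by rw [hc]; ring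
      _ ≤ (1 - Real.log s) * ((1+δ) * ((j:ℝ) * s)) := by
          apply mul_le_mul_of_nonneg_right h1; positivity
      _ = (1+δ) * (1 - Real.log s) * ((j:ℝ) * s) := by ring
  -- the chain of inequalities
  have hcont : Continuous fun s : ℝ => Real.exp (c * s) :=
    Real.continuous_exp.comp (continuous_const.mul continuous_id)
  have h3 : (∫ s in Set.Ioc (0:ℝ) (1/(j:ℝ)), Real.exp (c * s)) ≤
      ∫ s in Set.Ioc (0:ℝ) (1/(j:ℝ)), f s :=
    setIntegral_mono_on (hcont.integrableOn_Ioc) (hfint.mono_set hsub)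
      measurableSet_Ioc hpt
  have h4 : (∫ s in Set.Ioc (0:ℝ) (1/(j:ℝ)), f s) ≤ ∫ s in Set.Ioc (0:ℝ) 1, f s := by
    apply setIntegral_mono_set hfint
    · filter_upwards with s; exact (Real.exp_pos _).le
    · exact HasSubset.Subset.eventuallyLE hsub
  -- compute the left integral
  have h5 : (∫ s in Set.Ioc (0:ℝ) (1/(j:ℝ)), Real.exp (c * s)) =
      c⁻¹ * (Real.exp (c * (1/(j:ℝ))) - 1) := by
    rw [← intervalIntegral.integral_of_le (by positivity : (0:ℝ) ≤ 1/(j:ℝ)),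
      intervalIntegral.integral_comp_mul_left (fun x => Real.exp x) hcpos.ne',
      integral_exp]
    rw [mul_zero, Real.exp_zero, smul_eq_mul]
  have hcj : c * (1/(j:ℝ)) = (1+δ) * (1 + Real.log j) := by
    rw [hc]; field_simp
  have hexp : Real.exp (c * (1/(j:ℝ))) = Real.exp (1+δ) * ((j:ℝ) * (j:ℝ) ^ δ) := by
    rw [hcj,
      show (1+δ) * (1 + Real.log j) = (1+δ) + (Real.log (j:ℝ) + Real.log (j:ℝ) * δ) by ring,
      Real.exp_add, Real.exp_add, Real.exp_add, Real.exp_log hj0,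
      Real.rpow_def_of_pos hj0]
  have hloge : Real.log ((j:ℝ) * Real.exp 1) = Real.log j + 1 := by
    rw [Real.log_mul hj0.ne' (Real.exp_ne_zero 1), Real.log_exp]
  -- the algebra
  have halg : Real.exp (1 + δ) / (1 + δ) * ((j : ℝ) ^ δ / Real.log ((j : ℝ) * Real.exp 1)) -
        1 / ((j : ℝ) * ((1 + δ) * Real.log ((j : ℝ) * Real.exp 1))) =
      c⁻¹ * (Real.exp (c * (1/(j:ℝ))) - 1) := by
    rw [hexp, hloge, hc]
    have h1 : Real.log (j:ℝ) + 1 ≠ 0 := by positivity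
    field_simp
    ring
  rw [halg, hIfun, ← h5]
  exact le_trans h3 h4

/-- The lower bound tends to infinity (part 2 auxiliary). -/
lemma aux_tendsto (δ : ℝ) (hδ : 0 < δ) :
    Filter.Tendsto (fun j : ℕ =>
      Real.exp (1 + δ) / (1 + δ) * ((j : ℝ) ^ δ / Real.log ((j : ℝ) * Real.exp 1)) -
        1 / ((j : ℝ) * ((1 + δ) * Real.log ((j : ℝ) * Real.exp 1))))
      Filter.atTop Filter.atTop := by
  have hβ : (0:ℝ) < 1 + δ := by linarith
  set K : ℝ := Real.exp (1 + δ) / (1 + δ) / (1 + 2/δ) with hK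
  have hKpos : 0 < K := by positivity
  have hmain : Filter.Tendsto (fun j : ℕ => K * (j:ℝ) ^ (δ/2) - 1)
      Filter.atTop Filter.atTop := by
    apply Filter.tendsto_atTop_add_const_right
    apply Filter.Tendsto.const_mul_atTop hKpos
    exact (tendsto_rpow_atTop (by positivity : 0 < δ/2)).comp
      tendsto_natCast_atTop_atTop
  apply tendsto_atTop_mono' _ _ hmain
  filter_upwards [Filter.eventually_ge_atTop 1] with j hj
  have hj0 : (0:ℝ) < j := by exact_mod_cast Nat.pos_of_ne_zero (by omega)
  have hj1 : (1:ℝ) ≤ j := by exact_mod_cast hj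
  have hlogj : 0 ≤ Real.log j := Real.log_nonneg hj1
  have hloge : Real.log ((j:ℝ) * Real.exp 1) = Real.log j + 1 := by
    rw [Real.log_mul hj0.ne' (Real.exp_ne_zero 1), Real.log_exp]
  have hr1 : (1:ℝ) ≤ (j:ℝ) ^ (δ/2) := Real.one_le_rpow hj1 (by positivity)
  -- bound the subtracted term by 1
  have hterm2 : 1 / ((j : ℝ) * ((1 + δ) * Real.log ((j : ℝ) * Real.exp 1))) ≤ 1 := by
    rw [hloge]
    have hb : (1:ℝ) ≤ (1 + δ) * (Real.log j + 1) := by nlinarith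
    have hden : (1:ℝ) ≤ (j : ℝ) * ((1 + δ) * (Real.log j + 1)) :=
      le_trans hb (le_mul_of_one_le_left (by positivity) hj1)
    rw [div_le_one (by linarith)]
    linarith
  -- bound the main term from below
  have hlog_le : Real.log j ≤ (2/δ) * (j:ℝ) ^ (δ/2) := by
    have := Real.log_le_rpow_div hj0.le (by positivity : (0:ℝ) < δ/2)
    calc Real.log j ≤ (j:ℝ) ^ (δ/2) / (δ/2) := this
      _ = (2/δ) * (j:ℝ) ^ (δ/2) := by field_simp
  have hden_le : Real.log j + 1 ≤ (1 + 2/δ) * (j:ℝ) ^ (δ/2) := by nlinarith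
  have hfirst : K * (j:ℝ) ^ (δ/2) ≤
      Real.exp (1 + δ) / (1 + δ) * ((j : ℝ) ^ δ / Real.log ((j : ℝ) * Real.exp 1)) := by
    rw [hloge, hK]
    have hδν : (0:ℝ) < 1 + 2/δ := by positivity
    have hsplit : (j:ℝ) ^ δ = (j:ℝ) ^ (δ/2) * (j:ℝ) ^ (δ/2) := by
      rw [← Real.rpow_add hj0]; ring_nf
    have hq : (j:ℝ) ^ (δ/2) / (1 + 2/δ) ≤ (j:ℝ) ^ δ / (Real.log j + 1) := by
      rw [hsplit, div_le_div_iff₀ hδν (by linarith)]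
      calc (j:ℝ) ^ (δ/2) * (Real.log j + 1) ≤
            (j:ℝ) ^ (δ/2) * ((1 + 2/δ) * (j:ℝ) ^ (δ/2)) := by
              apply mul_le_mul_of_nonneg_left hden_le (by positivity)
        _ = (j:ℝ) ^ (δ/2) * (j:ℝ) ^ (δ/2) * (1 + 2/δ) := by ring
    calc Real.exp (1 + δ) / (1 + δ) / (1 + 2/δ) * (j:ℝ) ^ (δ/2)
        = Real.exp (1 + δ) / (1 + δ) * ((j:ℝ) ^ (δ/2) / (1 + 2/δ)) := by ring
      _ ≤ Real.exp (1 + δ) / (1 + δ) * ((j:ℝ) ^ δ / (Real.log j + 1)) := by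
          apply mul_le_mul_of_nonneg_left hq (by positivity)
  linarith

/-- The Moser function together with its derivative belongs to `E_N`. -/
lemma memEN_moser (N j : ℕ) (hN : 2 ≤ N) (hj : 1 ≤ j) :
    MemEN N (moser N j) (fun t => if t ≤ 1/(j:ℝ) then (j:ℝ) ^ ((1:ℝ)/N) else 0) := by
  have hj0 : (0:ℝ) < j := by exact_mod_cast Nat.pos_of_ne_zero (by omega)
  have hj1 : (1:ℝ) ≤ j := by exact_mod_cast hj
  set c0 : ℝ := (j:ℝ) ^ ((1:ℝ)/N) with hc0
  set g : ℝ → ℝ := fun t => if t ≤ 1/(j:ℝ) then c0 else 0 with hg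
  have hgind : g = (Set.Iic (1/(j:ℝ))).indicator (fun _ => c0) := by
    ext t; by_cases h : t ≤ 1/(j:ℝ) <;> simp [hg, Set.indicator, h]
  have hgii : ∀ a b : ℝ, IntervalIntegrable g volume a b := by
    intro a b
    rw [intervalIntegrable_iff, hgind]
    exact MeasureTheory.Integrable.indicator
      (integrableOn_const measure_Ioc_lt_top.ne) measurableSet_Iic
  have hint : ∀ s : ℝ, 0 ≤ s → s ≤ 1/(j:ℝ) → (∫ t in (0:ℝ)..s, g t) = c0 * s := by
    intro s hs0 hsle
    have heq : Set.EqOn g (fun _ => c0) (Set.uIcc 0 s) := by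
      intro t ht
      rw [Set.uIcc_of_le hs0] at ht
      exact if_pos (le_trans ht.2 hsle)
    rw [intervalIntegral.integral_congr heq, intervalIntegral.integral_const, smul_eq_mul]
    ring
  have hrepr : ∀ s ∈ Set.Icc (0:ℝ) 1, moser N j s = ∫ t in (0:ℝ)..s, g t := by
    intro s hs
    by_cases hcs : s ≤ 1/(j:ℝ)
    · rw [hint s hs.1 hcs, moser_left N j hcs]
    · have hlt : 1/(j:ℝ) < s := lt_of_not_ge hcs
      have hsplit : (∫ t in (0:ℝ)..s, g t) =
          (∫ t in (0:ℝ)..(1/(j:ℝ)), g t) + ∫ t in (1/(j:ℝ))..s, g t :=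
        (intervalIntegral.integral_add_adjacent_intervals (hgii _ _) (hgii _ _)).symm
      have hzero : (∫ t in (1/(j:ℝ))..s, g t) = 0 := by
        rw [intervalIntegral.integral_of_le hlt.le]
        rw [setIntegral_congr_fun measurableSet_Ioc
          (fun t ht => if_neg (not_le.2 ht.1) :
            Set.EqOn g (fun _ => (0:ℝ)) (Set.Ioc (1/(j:ℝ)) s))]
        simp
      have hval : c0 * (1/(j:ℝ)) = (j:ℝ) ^ (-(((N:ℝ) - 1) / N)) := by
        rw [hc0, show (1:ℝ)/(j:ℝ) = (j:ℝ) ^ (-1:ℝ) by rw [Real.rpow_neg_one, one_div],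
          ← Real.rpow_add hj0]
        congr 1
        have hNr : ((N:ℝ)) ≠ 0 := by positivity
        field_simp
        ring
      rw [hsplit, hzero, hint (1/(j:ℝ)) (by positivity) le_rfl, add_zero,
        moser_right N j hcs, hval]
  have hu0 : moser N j 0 = 0 := by
    rw [moser_left N j (by positivity : (0:ℝ) ≤ 1/(j:ℝ)), mul_zero]
  have habs : (fun t => |g t| ^ N) = (Set.Iic (1/(j:ℝ))).indicator (fun _ => (j:ℝ)) := by
    ext t
    by_cases h : t ≤ 1/(j:ℝ)
    · rw [Set.indicator_of_mem (Set.mem_Iic.2 h)]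
      simp only [hg, if_pos h]
      rw [abs_of_nonneg (by rw [hc0]; positivity), hc0, c0_pow N j hN hj]
    · rw [Set.indicator_of_notMem (by simpa using h)]
      simp only [hg, if_neg h]
      rw [abs_zero, zero_pow (by omega : N ≠ 0)]
  have hint4 : MeasureTheory.IntegrableOn (fun t => |g t| ^ N) (Set.Ioc (0:ℝ) 1) := by
    rw [habs]
    exact MeasureTheory.Integrable.indicator
      (integrableOn_const measure_Ioc_lt_top.ne) measurableSet_Iic
  have hI : (∫ t in Set.Ioc (0:ℝ) 1, |g t| ^ N) = 1 := by
    rw [habs, MeasureTheory.setIntegral_indicator measurableSet_Iic]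
    have hset : Set.Ioc (0:ℝ) 1 ∩ Set.Iic (1/(j:ℝ)) = Set.Ioc 0 (1/(j:ℝ)) := by
      rw [Set.Ioc_inter_Iic, min_eq_right (by rw [div_le_one hj0]; exact hj1)]
    rw [hset, MeasureTheory.setIntegral_const, smul_eq_mul, measureReal_def, Real.volume_Ioc, sub_zero,
      ENNReal.toReal_ofReal (by positivity)]
    field_simp
  exact ⟨hrepr, hu0, hgii 0 1, hint4, hI⟩

/-- the supercritical Limiting-Bliss inequality fails: writing `β = 1 + δ`
with `δ > 0`, along the infinitesimal Moser sequence one has the explicit lower bound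
`I_β(w_j) ≥ (e^{1+δ}/(1+δ)) · j^δ / log (j e) − 1/(j (1+δ) log(j e)) → ∞`; in particular
the supremum of `I_β` over `E_N` is infinite. -/
theorem limiting_bliss_supercritical (N : ℕ) (hN : 2 ≤ N) (δ : ℝ) (hδ : 0 < δ) :
    (∀ j : ℕ, 1 ≤ j →
      Real.exp (1 + δ) / (1 + δ) * ((j : ℝ) ^ δ / Real.log ((j : ℝ) * Real.exp 1)) -
        1 / ((j : ℝ) * ((1 + δ) * Real.log ((j : ℝ) * Real.exp 1))) ≤
        Ifun N (1 + δ) (moser N j)) ∧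
    Filter.Tendsto (fun j : ℕ => Ifun N (1 + δ) (moser N j)) Filter.atTop Filter.atTop ∧
    (∀ C : ℝ, ∃ u g : ℝ → ℝ, MemEN N u g ∧ C < Ifun N (1 + δ) u) := by
  have htend : Filter.Tendsto (fun j : ℕ => Ifun N (1 + δ) (moser N j))
      Filter.atTop Filter.atTop := by
    apply tendsto_atTop_mono' _ _ (aux_tendsto δ hδ)
    filter_upwards [Filter.eventually_ge_atTop 1] with j hj
    exact main_bound N hN δ hδ j hj
  refine ⟨fun j hj => main_bound N hN δ hδ j hj, htend, fun C => ?_⟩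
  obtain ⟨j, hjC, hj1⟩ :=
    ((htend.eventually (Filter.eventually_gt_atTop C)).and
      (Filter.eventually_ge_atTop 1)).exists
  exact ⟨moser N j, _, memEN_moser N j hN hj1, hjC⟩
end

section
/- Let N ≥ 2 be an integer and w ∈ E_N with w ≥ 0. Suppose the maximum of s ↦ w(s)^N/s^{N−1} over (0,1] equals 1 − δ and is attained at a ∈ (0,1] with w(a) > 0, i.e. 1 − δ = max_{s∈(0,1]} w(s)^N/s^{N−1} = w(a)^N/a^{N−1} with δ ∈ [0,1]. Then (w(a)/a)^{N−2} ∫₀^a | w'(s) − w(a)/a |² ds + ∫_a^1 |w'(s)|^N ds ≤ δ. -/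
open MeasureTheory Real Set Filter

lemma ptwise (M : ℕ) (t : ℝ) : 1 + (M+2:ℝ)*(t-1) + (t-1)^2 ≤ |t|^(M+2) := by
  have hM : (0:ℝ) ≤ M := Nat.cast_nonneg M
  rcases le_or_gt 0 t with h0 | h0
  · rw [abs_of_nonneg h0]
    rcases le_or_gt 1 t with h1 | h1
    · have hB := one_add_mul_le_pow (show (-2:ℝ) ≤ t - 1 by linarith) (M+1)
      have ht : (1:ℝ) + (t - 1) = t := by ring
      rw [ht] at hB
      push_cast at hB
      have ht2 : t^(M+2) = t^(M+1) * t := by ring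
      nlinarith [mul_le_mul_of_nonneg_right hB (show (0:ℝ) ≤ t by linarith),
        mul_nonneg hM (sq_nonneg (t-1))]
    · have hB := one_add_mul_le_pow (show (-2:ℝ) ≤ t - 1 by linarith) M
      have ht : (1:ℝ) + (t - 1) = t := by ring
      rw [ht] at hB
      have ht2 : t^(M+2) = t^M * t^2 := by ring
      nlinarith [mul_le_mul_of_nonneg_right hB (sq_nonneg t),
        mul_nonneg (mul_nonneg hM (sq_nonneg (t-1))) (show (0:ℝ) ≤ t + 1 by linarith)]
  · rw [abs_of_neg h0]
    have hr : (0:ℝ) ≤ -t := by linarith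
    have hB := one_add_mul_le_pow (show (-2:ℝ) ≤ -t - 1 by linarith) M
    have ht : (1:ℝ) + (-t - 1) = -t := by ring
    rw [ht] at hB
    have ht2 : (-t)^(M+2) = (-t)^M * t^2 := by ring
    nlinarith [mul_le_mul_of_nonneg_right hB (sq_nonneg t),
      mul_nonneg hM (mul_nonneg hr (sq_nonneg (-t-1))),
      mul_nonneg hM (sq_nonneg t)]

lemma ptwise' (M : ℕ) {c : ℝ} (hc : 0 < c) (t : ℝ) :
    c^(M+2) + (M+2:ℝ)*c^(M+1)*(t-c) + c^M*(t-c)^2 ≤ |t|^(M+2) := by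
  have h := ptwise M (t/c)
  have hc' : c ≠ 0 := hc.ne'
  have habs : |t/c|^(M+2) = |t|^(M+2) / c^(M+2) := by
    rw [abs_div, abs_of_pos hc, div_pow]
  rw [habs] at h
  have h2 := mul_le_mul_of_nonneg_left h (le_of_lt (pow_pos hc (M+2)))
  have e1 : c^(M+2) * (|t|^(M+2) / c^(M+2)) = |t|^(M+2) := by
    field_simp
  have e2 : c^(M+2) * (1 + (M+2:ℝ)*(t/c-1) + (t/c-1)^2)
      = c^(M+2) + (M+2:ℝ)*c^(M+1)*(t-c) + c^M*(t-c)^2 := by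
    field_simp
    ring
  rw [e1, e2] at h2
  exact h2

lemma sq_le_one_add_pow (M : ℕ) (x : ℝ) (hx : 0 ≤ x) : x^2 ≤ 1 + x^(M+2) := by
  rcases le_or_gt x 1 with h | h
  · nlinarith [pow_nonneg hx (M+2)]
  · have h1 : x^2 ≤ x^(M+2) := pow_le_pow_right₀ h.le (by omega)
    nlinarith

/-- Lemma 3.1: if `w ∈ E_N`, `w ≥ 0`, and the maximum of
`s ↦ w(s)^N/s^{N-1}` over `(0,1]` equals `1 − δ` and is attained at `a` with `w a > 0`,
then `(w(a)/a)^{N-2} ∫₀^a |w' − w(a)/a|² + ∫_a^1 |w'|^N ≤ δ`. -/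
theorem close_to_moser (N : ℕ) (hN : 2 ≤ N) (w g : ℝ → ℝ) (hw : MemEN N w g)
    (hwpos : ∀ s ∈ Set.Icc (0:ℝ) 1, 0 ≤ w s)
    (a δ : ℝ) (ha : a ∈ Set.Ioc (0:ℝ) 1) (hδ : δ ∈ Set.Icc (0:ℝ) 1) (hwa : 0 < w a)
    (hmax : ∀ s ∈ Set.Ioc (0:ℝ) 1, w s ^ N / s ^ (N - 1) ≤ 1 - δ)
    (heq : w a ^ N / a ^ (N - 1) = 1 - δ) :
    (w a / a) ^ (N - 2) * (∫ s in Set.Ioc (0:ℝ) a, |g s - w a / a| ^ 2) +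
      (∫ s in Set.Ioc a 1, |g s| ^ N) ≤ δ := by
  obtain ⟨M, rfl⟩ : ∃ M, N = M + 2 := ⟨N - 2, by omega⟩
  obtain ⟨hrepr, hw0, hint, hLN, hnorm⟩ := hw
  obtain ⟨ha0, ha1⟩ := ha
  have ha0' : a ≠ 0 := ha0.ne'
  set c := w a / a with hc_def
  have hc : 0 < c := div_pos hwa ha0
  have hsub2 : M + 2 - 2 = M := by omega
  have hsub1 : M + 2 - 1 = M + 1 := by omega
  rw [hsub2]
  rw [hsub1] at heq
  simp only [sq_abs]
  -- w a as integral
  have hwa_int : w a = ∫ t in Ioc (0:ℝ) a, g t := by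
    have h := hrepr a ⟨ha0.le, ha1⟩
    rwa [intervalIntegral.integral_of_le ha0.le] at h
  -- integrability facts
  have hg1 : IntegrableOn g (Ioc (0:ℝ) 1) :=
    (intervalIntegrable_iff_integrableOn_Ioc_of_le zero_le_one).mp hint
  have hsubA : Ioc (0:ℝ) a ⊆ Ioc 0 1 := Ioc_subset_Ioc_right ha1
  have hsubB : Ioc a (1:ℝ) ⊆ Ioc 0 1 := Ioc_subset_Ioc_left ha0.le
  have hga : IntegrableOn g (Ioc (0:ℝ) a) := hg1.mono_set hsubA
  have hNa : IntegrableOn (fun t => |g t|^(M+2)) (Ioc (0:ℝ) a) := hLN.mono_set hsubA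
  have hNb : IntegrableOn (fun t => |g t|^(M+2)) (Ioc a (1:ℝ)) := hLN.mono_set hsubB
  have hconst : ∀ C : ℝ, IntegrableOn (fun _ : ℝ => C) (Ioc (0:ℝ) a) := fun C =>
    integrableOn_const measure_Ioc_lt_top.ne
  have hsq : IntegrableOn (fun t => (g t - c)^2) (Ioc (0:ℝ) a) := by
    have hmeas : AEStronglyMeasurable (fun t => (g t - c)^2)
        (volume.restrict (Ioc (0:ℝ) a)) :=
      (hga.aestronglyMeasurable.sub aestronglyMeasurable_const).pow 2
    have hbd : IntegrableOn (fun t => 2*|g t|^(M+2) + (2 + 2*c^2)) (Ioc (0:ℝ) a) :=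
      (hNa.const_mul 2).add (hconst _)
    refine hbd.mono' hmeas ?_
    filter_upwards with t
    have h1 := sq_le_one_add_pow M (|g t|) (abs_nonneg _)
    have h2 : (g t)^2 = |g t|^2 := (sq_abs _).symm
    rw [Real.norm_eq_abs, abs_of_nonneg (sq_nonneg _)]
    nlinarith [sq_nonneg (g t + c), sq_nonneg (g t - c)]
  -- pointwise inequality integrated
  have hLHSint : IntegrableOn
      (fun t => c^(M+2) + (M+2:ℝ)*c^(M+1)*(g t - c) + c^M*(g t - c)^2) (Ioc (0:ℝ) a) := by
    exact ((hconst _).add (((hga.sub (hconst _)).const_mul _))).add (hsq.const_mul _)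
  have hmono := setIntegral_mono_on hLHSint hNa measurableSet_Ioc
    (fun t _ => ptwise' M hc (g t))
  -- compute LHS of hmono
  have hvol : (volume (Ioc (0:ℝ) a)).toReal = a := by
    simp [Real.volume_Ioc, ha0.le]
  have hintg : ∫ t in Ioc (0:ℝ) a, (g t - c) = 0 := by
    rw [integral_sub hga (hconst _), setIntegral_const, measureReal_def, hvol, ← hwa_int]
    simp [hc_def]
    field_simp
    ring
  have hBint : IntegrableOn (fun t => (M+2:ℝ)*c^(M+1)*(g t - c)) (Ioc (0:ℝ) a) := by
    exact (hga.sub (hconst c)).const_mul _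
  have hCint : IntegrableOn (fun t => c^M*(g t - c)^2) (Ioc (0:ℝ) a) := by
    exact hsq.const_mul _
  have hABint : IntegrableOn (fun t => c^(M+2) + (M+2:ℝ)*c^(M+1)*(g t - c)) (Ioc (0:ℝ) a) := by
    exact (hconst _).add hBint
  have hsplitLHS : ∫ t in Ioc (0:ℝ) a,
      (c^(M+2) + (M+2:ℝ)*c^(M+1)*(g t - c) + c^M*(g t - c)^2)
      = a * c^(M+2) + c^M * ∫ t in Ioc (0:ℝ) a, (g t - c)^2 := by
    rw [integral_add hABint hCint, integral_add (hconst _) hBint,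
      integral_const_mul, integral_const_mul, hintg, setIntegral_const, measureReal_def, hvol, smul_eq_mul]
    ring
  rw [hsplitLHS] at hmono
  -- a * c^(M+2) = 1 - δ
  have hac : a * c^(M+2) = 1 - δ := by
    rw [← heq, hc_def, div_pow, pow_succ a (M+1)]
    field_simp
  -- split the unit integral
  have hsplit : (∫ t in Ioc (0:ℝ) a, |g t|^(M+2)) + (∫ t in Ioc a 1, |g t|^(M+2)) = 1 := by
    rw [← setIntegral_union (Set.Ioc_disjoint_Ioc_of_le le_rfl) measurableSet_Ioc hNa hNb,
      Ioc_union_Ioc_eq_Ioc ha0.le ha1, hnorm]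
  linarith
end

section
/- Let N ≥ 2 be an integer and w ∈ E_N with w ≥ 0. Suppose 1 − δ = max_{s∈(0,1]} w(s)^N/s^{N−1} = w(a)^N/a^{N−1} with δ ∈ [0,1] and a ∈ (0,1]. Then w(s) ≤ w(a) + (s − a)^{1 − 1/N} δ^{1/N} for all s ∈ [a, 1]. -/
open MeasureTheory Real Set Filter

lemma holder_aux_s13 (N : ℕ) (hN : 2 ≤ N) (g : ℝ → ℝ) (c d : ℝ) (hcd : c < d)
    (hg : IntervalIntegrable g MeasureTheory.volume c d)
    (hint : MeasureTheory.IntegrableOn (fun t => |g t| ^ N) (Set.Ioc c d)) :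
    ∫ t in c..d, g t ≤
      (d - c) ^ (1 - 1 / (N : ℝ)) * (∫ t in Set.Ioc c d, |g t| ^ N) ^ (1 / (N : ℝ)) := by
  have hN1 : (1 : ℝ) < N := by exact_mod_cast lt_of_lt_of_le one_lt_two hN
  have hN0 : (0 : ℝ) < N := lt_trans one_pos hN1
  set μ := MeasureTheory.volume.restrict (Set.Ioc c d) with hμ
  haveI : IsFiniteMeasure μ := by
    constructor
    rw [hμ, Measure.restrict_apply_univ, Real.volume_Ioc]
    exact ENNReal.ofReal_lt_top
  have hpq : Real.HolderConjugate (N : ℝ) ((N : ℝ) / ((N : ℝ) - 1)) :=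
    (Real.holderConjugate_iff_eq_conjExponent hN1).2 rfl
  have hgi : MeasureTheory.IntegrableOn g (Set.Ioc c d) := hg.1
  have hmeas : AEStronglyMeasurable g μ := hgi.aestronglyMeasurable
  -- Memℒp of g with exponent N
  have hNne : (ENNReal.ofReal (N : ℝ)) ≠ 0 := (ENNReal.ofReal_pos.2 hN0).ne'
  have hNtop : (ENNReal.ofReal (N : ℝ)) ≠ ⊤ := ENNReal.ofReal_ne_top
  have hmem : MemLp g (ENNReal.ofReal (N : ℝ)) μ := by
    rw [← memLp_norm_rpow_iff hmeas hNne hNtop, ENNReal.toReal_ofReal hN0.le,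
      ENNReal.div_self hNne hNtop, memLp_one_iff_integrable]
    apply hint.congr_fun ?_ measurableSet_Ioc
    intro x _
    simp [Real.norm_eq_abs, Real.rpow_natCast]
  have hmemabs : MemLp (fun t => |g t|) (ENNReal.ofReal (N : ℝ)) μ := by
    simpa [Real.norm_eq_abs] using hmem.norm
  have hmem1 : MemLp (fun _ : ℝ => (1 : ℝ)) (ENNReal.ofReal ((N : ℝ) / ((N : ℝ) - 1))) μ :=
    memLp_const 1
  have H := MeasureTheory.integral_mul_le_Lp_mul_Lq_of_nonneg (μ := μ) hpq
    (f := fun t => |g t|) (g := fun _ => (1 : ℝ))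
    (Filter.Eventually.of_forall fun x => abs_nonneg _)
    (Filter.Eventually.of_forall fun x => zero_le_one) hmemabs hmem1
  simp only [mul_one] at H
  have h1 : ∫ t in c..d, g t ≤ ∫ x, |g x| ∂μ := by
    rw [intervalIntegral.integral_of_le hcd.le]
    calc ∫ x, g x ∂μ ≤ |∫ x, g x ∂μ| := le_abs_self _
    _ ≤ ∫ x, |g x| ∂μ := by
        simpa [Real.norm_eq_abs] using MeasureTheory.norm_integral_le_integral_norm (μ := μ) g
  refine h1.trans (H.trans ?_)
  have e1 : ∫ x, |g x| ^ (N : ℝ) ∂μ = ∫ t in Set.Ioc c d, |g t| ^ N := by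
    rw [hμ]
    apply setIntegral_congr_fun measurableSet_Ioc
    intro x _
    simp [Real.rpow_natCast]
  have e2 : ∫ x, (1 : ℝ) ^ ((N : ℝ) / ((N : ℝ) - 1)) ∂μ = d - c := by
    simp [hμ, Real.volume_Ioc, ENNReal.toReal_ofReal (sub_nonneg.2 hcd.le), hcd.le]
  rw [e1, e2]
  have e3 : 1 / ((N : ℝ) / ((N : ℝ) - 1)) = 1 - 1 / (N : ℝ) := by
    field_simp
  rw [e3, mul_comm]

/-- Lemma 3.2: if `w ∈ E_N`, `w ≥ 0`, and the maximum of
`s ↦ w(s)^N/s^{N-1}` over `(0,1]` equals `1 − δ` and is attained at `a`, then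
`w(s) ≤ w(a) + (s − a)^{1 − 1/N} δ^{1/N}` for all `s ∈ [a,1]`. -/
theorem bound_right_of_max (N : ℕ) (hN : 2 ≤ N) (w g : ℝ → ℝ) (hw : MemEN N w g)
    (hwpos : ∀ s ∈ Set.Icc (0:ℝ) 1, 0 ≤ w s)
    (a δ : ℝ) (ha : a ∈ Set.Ioc (0:ℝ) 1) (hδ : δ ∈ Set.Icc (0:ℝ) 1)
    (hmax : ∀ s ∈ Set.Ioc (0:ℝ) 1, w s ^ N / s ^ (N - 1) ≤ 1 - δ)
    (heq : w a ^ N / a ^ (N - 1) = 1 - δ) :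
    ∀ s ∈ Set.Icc a 1,
      w s ≤ w a + (s - a) ^ (1 - 1 / (N : ℝ)) * δ ^ (1 / (N : ℝ)) := by
  obtain ⟨hrep, hw0, hgint, hpint, htot⟩ := hw
  have hN1 : (1 : ℝ) < N := by exact_mod_cast lt_of_lt_of_le one_lt_two hN
  have hN0 : (0 : ℝ) < N := lt_trans one_pos hN1
  obtain ⟨ha0, ha1⟩ := ha
  obtain ⟨hδ0, hδ1⟩ := hδ
  intro s hs
  obtain ⟨hsa, hs1⟩ := hs
  have hs0 : 0 < s := lt_of_lt_of_le ha0 hsa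
  have hRHSnn : 0 ≤ (s - a) ^ (1 - 1 / (N : ℝ)) * δ ^ (1 / (N : ℝ)) :=
    mul_nonneg (Real.rpow_nonneg (sub_nonneg.2 hsa) _) (Real.rpow_nonneg hδ0 _)
  rcases eq_or_lt_of_le hsa with hsa' | hsa'
  · subst hsa'
    linarith [hRHSnn]
  -- nonnegativity of integrals
  set I0a := ∫ t in Set.Ioc (0:ℝ) a, |g t| ^ N with hI0a
  set Ias := ∫ t in Set.Ioc a s, |g t| ^ N with hIas
  have hI0a_nn : 0 ≤ I0a := setIntegral_nonneg measurableSet_Ioc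
    (fun x _ => pow_nonneg (abs_nonneg _) _)
  have hIas_nn : 0 ≤ Ias := setIntegral_nonneg measurableSet_Ioc
    (fun x _ => pow_nonneg (abs_nonneg _) _)
  -- integrability on subintervals
  have hsub1 : Set.Ioc (0:ℝ) a ⊆ Set.Ioc 0 1 := Set.Ioc_subset_Ioc le_rfl ha1
  have hsub2 : Set.Ioc a s ⊆ Set.Ioc (0:ℝ) 1 := Set.Ioc_subset_Ioc ha0.le hs1
  have hsub3 : Set.Ioc (0:ℝ) s ⊆ Set.Ioc 0 1 := Set.Ioc_subset_Ioc le_rfl hs1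
  have hint1 : MeasureTheory.IntegrableOn (fun t => |g t| ^ N) (Set.Ioc (0:ℝ) a) :=
    hpint.mono_set hsub1
  have hint2 : MeasureTheory.IntegrableOn (fun t => |g t| ^ N) (Set.Ioc a s) :=
    hpint.mono_set hsub2
  have hgi1 : IntervalIntegrable g MeasureTheory.volume 0 a :=
    hgint.mono_set (Set.uIcc_subset_uIcc_iff_le.2 (by constructor <;> simp [ha0.le, ha1, hsa, hs1]))
  have hgi2 : IntervalIntegrable g MeasureTheory.volume a s := by
    apply hgint.mono_set
    rw [Set.uIcc_of_le hsa, Set.uIcc_of_le (zero_le_one)]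
    exact Set.Icc_subset_Icc ha0.le hs1
  -- powers of a
  have haN : (0:ℝ) < a ^ (N - 1) := pow_pos ha0 _
  have hNcast : ((N - 1 : ℕ) : ℝ) = (N : ℝ) - 1 := by
    have : 1 ≤ N := le_trans one_le_two hN
    push_cast [Nat.cast_sub this]
    ring
  -- Step 1 : 1 - δ ≤ I0a
  have hwa : w a = ∫ t in (0:ℝ)..a, g t := hrep a ⟨ha0.le, ha1⟩
  have hwann : 0 ≤ w a := hwpos a ⟨ha0.le, ha1⟩
  have step1 : 1 - δ ≤ I0a := by
    have hH := holder_aux_s13 N hN g 0 a ha0 hgi1 hint1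
    rw [← hwa] at hH
    simp only [sub_zero] at hH
    have hpow : w a ^ N ≤ a ^ (N - 1) * I0a := by
      calc w a ^ N ≤ (a ^ (1 - 1 / (N : ℝ)) * I0a ^ (1 / (N : ℝ))) ^ N :=
            pow_le_pow_left₀ hwann hH N
        _ = a ^ (N - 1) * I0a := by
            rw [mul_pow, ← Real.rpow_natCast (a ^ (1 - 1 / (N : ℝ))) N,
              ← Real.rpow_natCast (I0a ^ (1 / (N : ℝ))) N,
              ← Real.rpow_mul ha0.le, ← Real.rpow_mul hI0a_nn]
            have e1 : (1 - 1 / (N : ℝ)) * N = ((N - 1 : ℕ) : ℝ) := by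
              rw [hNcast]; field_simp
            have e2 : (1 / (N : ℝ)) * N = 1 := by field_simp
            rw [e1, e2, Real.rpow_one, Real.rpow_natCast]
    have hwaN : w a ^ N = (1 - δ) * a ^ (N - 1) := by
      field_simp at heq
      linarith [heq]
    rw [hwaN] at hpow
    rw [mul_comm] at hpow
    exact le_of_mul_le_mul_left hpow haN
  -- Step 2 : Ias ≤ δ
  have step2 : Ias ≤ δ := by
    have hunion : Set.Ioc (0:ℝ) a ∪ Set.Ioc a s = Set.Ioc (0:ℝ) s :=
      Set.Ioc_union_Ioc_eq_Ioc ha0.le hsa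
    have hdisj : Disjoint (Set.Ioc (0:ℝ) a) (Set.Ioc a s) := Set.Ioc_disjoint_Ioc_of_le le_rfl
    have hadd : (∫ t in Set.Ioc (0:ℝ) s, |g t| ^ N) = I0a + Ias := by
      rw [← hunion]
      exact setIntegral_union hdisj measurableSet_Ioc hint1 hint2
    have hle1 : (∫ t in Set.Ioc (0:ℝ) s, |g t| ^ N) ≤ 1 := by
      rw [← htot]
      apply setIntegral_mono_set hpint
      · exact Filter.Eventually.of_forall fun x => pow_nonneg (abs_nonneg _) _
      · exact HasSubset.Subset.eventuallyLE hsub3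
    linarith [hadd ▸ hle1, step1]
  -- Step 3 : conclude
  have hws : w s = ∫ t in (0:ℝ)..s, g t := hrep s ⟨hs0.le, hs1⟩
  have hsplit : (∫ t in (0:ℝ)..a, g t) + (∫ t in a..s, g t) = ∫ t in (0:ℝ)..s, g t :=
    intervalIntegral.integral_add_adjacent_intervals hgi1 hgi2
  have hH := holder_aux_s13 N hN g a s hsa' hgi2 hint2
  have : w s - w a = ∫ t in a..s, g t := by
    rw [hws, hwa, ← hsplit]; ring
  have hfin : w s - w a ≤ (s - a) ^ (1 - 1 / (N : ℝ)) * δ ^ (1 / (N : ℝ)) := by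
    rw [this]
    refine hH.trans ?_
    apply mul_le_mul_of_nonneg_left ?_ (Real.rpow_nonneg (sub_nonneg.2 hsa) _)
    exact Real.rpow_le_rpow hIas_nn step2 (by positivity)
  linarith
end

section
/- Let N ≥ 2 be an integer and w ∈ E_N with w ≥ 0. Suppose 1 − δ = max_{s∈(0,1]} w(s)^N/s^{N−1} = w(a)^N/a^{N−1} with a ∈ (0,1], and assume 0 < δ < 1/2. Then w(s) ≤ s·a^{−1/N} + s^{(N−1)/N} (2δ)^{1/N} for all s ∈ [0, a]. -/
open MeasureTheory Real Set Filter

private lemma three_term_binomial (N : ℕ) (hN : 2 ≤ N) {m d : ℝ} (hm : 0 ≤ m) (hd : 0 ≤ d) :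
    m ^ N + N * m ^ (N - 1) * d + d ^ N ≤ (m + d) ^ N := by
  have hsub : ({N, N - 1, 0} : Finset ℕ) ⊆ Finset.range (N + 1) := by
    intro i hi
    simp only [Finset.mem_insert, Finset.mem_singleton] at hi
    simp only [Finset.mem_range]
    omega
  have hmem : (N : ℕ) ∉ ({N - 1, 0} : Finset ℕ) := by
    simp only [Finset.mem_insert, Finset.mem_singleton]
    omega
  have hmem2 : N - 1 ∉ ({0} : Finset ℕ) := by
    simp only [Finset.mem_singleton]
    omega
  have hchoose : N.choose (N - 1) = N := by
    have := Nat.choose_symm (show 1 ≤ N by omega) (n := N)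
    simpa [Nat.choose_one_right] using this
  calc m ^ N + N * m ^ (N - 1) * d + d ^ N
      = ∑ k ∈ ({N, N - 1, 0} : Finset ℕ), m ^ k * d ^ (N - k) * (N.choose k) := by
        rw [Finset.sum_insert hmem, Finset.sum_insert hmem2, Finset.sum_singleton]
        rw [Nat.choose_self, Nat.sub_self, hchoose, Nat.sub_sub_self (show 1 ≤ N by omega),
          Nat.choose_zero_right, Nat.sub_zero]
        push_cast
        ring
    _ ≤ ∑ k ∈ Finset.range (N + 1), m ^ k * d ^ (N - k) * (N.choose k) :=
        Finset.sum_le_sum_of_subset_of_nonneg hsub (fun i _ _ => by positivity)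
    _ = (m + d) ^ N := (add_pow m d N).symm

private lemma tangent_pow (N : ℕ) (hN : 1 ≤ N) {M d : ℝ} (hM : 0 < M) (hd : d ≤ M) :
    M ^ N - N * M ^ (N - 1) * d ≤ (M - d) ^ N := by
  have h1 : d / M ≤ 2 := le_trans ((div_le_one hM).2 hd) one_le_two
  have hb := one_add_mul_le_pow (show (-2 : ℝ) ≤ -(d / M) by linarith) N
  have hMN : (0 : ℝ) < M ^ N := pow_pos hM N
  have key : M ^ N * (1 + N * -(d / M)) ≤ M ^ N * (1 + -(d / M)) ^ N :=
    mul_le_mul_of_nonneg_left hb hMN.le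
  have hpow : M ^ (N - 1) * M = M ^ N := by
    rw [← pow_succ]; congr 1; omega
  have hMd : M * (1 + -(d / M)) = M - d := by field_simp; ring
  calc M ^ N - N * M ^ (N - 1) * d
      = M ^ N * (1 + N * -(d / M)) := by
        rw [← hpow]; field_simp; ring
    _ ≤ M ^ N * (1 + -(d / M)) ^ N := key
    _ = (M * (1 + -(d / M))) ^ N := (mul_pow _ _ _).symm
    _ = (M - d) ^ N := by rw [hMd]
private lemma pow_integral_le (N : ℕ) (hN : 1 ≤ N) (g : ℝ → ℝ) {u v : ℝ} (huv : u < v)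
    (hint : IntervalIntegrable g volume u v)
    (hintN : IntegrableOn (fun t => |g t| ^ N) (Ioc u v)) :
    (∫ t in u..v, g t) ^ N ≤ (v - u) ^ (N - 1) * ∫ t in Ioc u v, |g t| ^ N := by
  set μ := volume.restrict (Ioc u v) with hμ
  have hc : (0 : ℝ) < v - u := sub_pos.2 huv
  have hμuniv : μ univ = ENNReal.ofReal (v - u) := by
    rw [hμ, Measure.restrict_apply_univ, Real.volume_Ioc]
  haveI : IsFiniteMeasure μ := ⟨by rw [hμuniv]; exact ENNReal.ofReal_lt_top⟩
  haveI : NeZero μ := by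
    refine ⟨fun h => ?_⟩
    rw [h] at hμuniv
    simp only [Measure.coe_zero, Pi.zero_apply] at hμuniv
    rw [eq_comm, ENNReal.ofReal_eq_zero] at hμuniv
    linarith
  have hg1 : Integrable (fun t => |g t|) μ :=
    ((intervalIntegrable_iff_integrableOn_Ioc_of_le huv.le).1 hint).abs
  have hgN : Integrable (fun t => |g t| ^ N) μ := hintN
  have hJ := (convexOn_pow (𝕜 := ℝ) N).map_average_le (continuous_pow N).continuousOn
    isClosed_Ici (Eventually.of_forall fun x => abs_nonneg (g x)) hg1 hgN
  rw [average_eq, average_eq, measureReal_def, hμuniv, ENNReal.toReal_ofReal hc.le, smul_eq_mul, smul_eq_mul] at hJ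
  set J := ∫ x, |g x| ∂μ with hJdef
  set K := ∫ x, |g x| ^ N ∂μ with hKdef
  -- hJ : ((v-u)⁻¹ * J) ^ N ≤ (v-u)⁻¹ * K
  have hIJ : |∫ t in u..v, g t| ≤ J := by
    rw [intervalIntegral.integral_of_le huv.le]
    calc |∫ t in Ioc u v, g t| ≤ ∫ t in Ioc u v, |g t| := by
          simpa [Real.norm_eq_abs] using
            norm_integral_le_integral_norm (μ := volume.restrict (Ioc u v)) g
      _ = J := rfl
  have step1 : (∫ t in u..v, g t) ^ N ≤ J ^ N := by
    calc (∫ t in u..v, g t) ^ N ≤ |(∫ t in u..v, g t) ^ N| := le_abs_self _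
      _ = |∫ t in u..v, g t| ^ N := abs_pow _ _
      _ ≤ J ^ N := pow_le_pow_left₀ (abs_nonneg _) hIJ N
  have step2 : J ^ N ≤ (v - u) ^ (N - 1) * K := by
    have h2 : (v - u) ^ N * (((v - u)⁻¹ * J) ^ N) ≤ (v - u) ^ N * ((v - u)⁻¹ * K) :=
      mul_le_mul_of_nonneg_left hJ (by positivity)
    have e1 : (v - u) ^ N * (((v - u)⁻¹ * J) ^ N) = J ^ N := by
      rw [mul_pow, ← mul_assoc, ← mul_pow, mul_inv_cancel₀ hc.ne', one_pow, one_mul]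
    have e2 : (v - u) ^ N * ((v - u)⁻¹ * K) = (v - u) ^ (N - 1) * K := by
      rw [← mul_assoc]
      congr 1
      have : (v - u) ^ N = (v - u) ^ (N - 1) * (v - u) := by
        rw [← pow_succ]; congr 1; omega
      rw [this, mul_assoc, mul_inv_cancel₀ hc.ne', mul_one]
    rw [e1, e2] at h2
    exact h2
  exact step1.trans step2

private lemma Q_le_rpow (N : ℕ) (hN : 2 ≤ N) {a δ Q : ℝ} (ha : 0 < a) (hδ : 0 ≤ δ)
    (hQ0 : 0 ≤ Q) (hQN : Q ^ N = (1 - δ) * a ^ (N - 1)) :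
    Q ≤ a ^ (((N : ℝ) - 1) / (N : ℝ)) := by
  have hNR : (0 : ℝ) < N := by positivity
  have hcast : ((N : ℝ) - 1) = ((N - 1 : ℕ) : ℝ) := by
    push_cast [Nat.cast_sub (show 1 ≤ N by omega)]; ring
  have hpow : (a ^ (((N : ℝ) - 1) / (N : ℝ))) ^ N = a ^ (N - 1) := by
    rw [← Real.rpow_natCast (a ^ (((N : ℝ) - 1) / (N : ℝ))) N, ← Real.rpow_mul ha.le]
    rw [div_mul_cancel₀ _ hNR.ne', hcast, Real.rpow_natCast]
  refine (pow_le_pow_iff_left₀ (n := N) hQ0 (Real.rpow_nonneg ha.le _) (by omega)).1 ?_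
  rw [hpow, hQN]
  nlinarith [pow_nonneg ha.le (N - 1)]

private lemma key_alg (N : ℕ) (hN : 2 ≤ N) {s a δ P Q A B : ℝ}
    (hs : 0 < s) (hsa : s < a) (hP : 0 ≤ P) (hQ0 : 0 ≤ Q) (hPQ : P ≤ Q)
    (hδ : 0 < δ) (hδ1 : δ < 1)
    (hHA : P ^ N ≤ s ^ (N - 1) * A) (hHB : (Q - P) ^ N ≤ (a - s) ^ (N - 1) * B)
    (hAB : A + B ≤ 1) (hQN : Q ^ N = (1 - δ) * a ^ (N - 1)) :
    P ≤ s * a ^ (-(1 / (N : ℝ))) + s ^ (((N : ℝ) - 1) / (N : ℝ)) * (2 * δ) ^ (1 / (N : ℝ)) := by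
  have ha : 0 < a := hs.trans hsa
  have hNR : (0 : ℝ) < N := by positivity
  have hQa : Q ≤ a ^ (((N : ℝ) - 1) / (N : ℝ)) := Q_le_rpow N hN ha hδ.le hQ0 hQN
  -- first term bound
  have hexp : a ^ (((N : ℝ) - 1) / (N : ℝ)) / a = a ^ (-(1 / (N : ℝ))) := by
    have h := Real.rpow_sub ha (((N : ℝ) - 1) / (N : ℝ)) 1
    rw [Real.rpow_one] at h
    rw [← h]
    congr 1
    field_simp
    ring
  have hm2 : s * Q / a ≤ s * a ^ (-(1 / (N : ℝ))) := by
    calc s * Q / a ≤ s * a ^ (((N : ℝ) - 1) / (N : ℝ)) / a := by gcongr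
      _ = s * (a ^ (((N : ℝ) - 1) / (N : ℝ)) / a) := by ring
      _ = s * a ^ (-(1 / (N : ℝ))) := by rw [hexp]
  set m := s * Q / a with hmdef
  have hm0 : 0 ≤ m := div_nonneg (mul_nonneg hs.le hQ0) ha.le
  by_cases hPm : P ≤ m
  · have h2 : 0 ≤ s ^ (((N : ℝ) - 1) / (N : ℝ)) * (2 * δ) ^ (1 / (N : ℝ)) := by positivity
    linarith
  · push_neg at hPm
    set d := P - m with hddef
    have hd : 0 < d := sub_pos.2 hPm
    set M := (a - s) * Q / a with hMdef
    have hmM : m + M = Q := by rw [hmdef, hMdef]; field_simp; ring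
    have hQP : Q - P = M - d := by rw [hddef, ← hmM]; ring
    have hdM : d ≤ M := by
      have := sub_nonneg.2 hPQ
      linarith [hQP]
    have hM0 : 0 < M := lt_of_lt_of_le hd hdM
    have h1 : m ^ N + N * m ^ (N - 1) * d + d ^ N ≤ P ^ N := by
      have h := three_term_binomial N hN hm0 hd.le
      rwa [show m + d = P by rw [hddef]; ring] at h
    have h2 : M ^ N - N * M ^ (N - 1) * d ≤ (Q - P) ^ N := by
      rw [hQP]; exact tangent_pow N (by omega) hM0 hdM
    have hX0 : (0 : ℝ) ≤ s ^ (N - 1) := by positivity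
    have hY : (0 : ℝ) < (a - s) ^ (N - 1) := pow_pos (sub_pos.2 hsa) _
    have cross : m ^ (N - 1) * (a - s) ^ (N - 1) = M ^ (N - 1) * s ^ (N - 1) := by
      rw [← mul_pow, ← mul_pow]
      congr 1
      rw [hmdef, hMdef]
      field_simp
    have identity : m ^ N * (a - s) ^ (N - 1) + M ^ N * s ^ (N - 1)
        = (1 - δ) * (s ^ (N - 1) * (a - s) ^ (N - 1)) := by
      obtain ⟨k, rfl⟩ : ∃ k, N = k + 1 := ⟨N - 1, by omega⟩
      simp only [Nat.add_sub_cancel] at hQN ⊢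
      calc m ^ (k + 1) * (a - s) ^ k + M ^ (k + 1) * s ^ k
          = (s ^ (k + 1) * Q ^ (k + 1) / a ^ (k + 1)) * (a - s) ^ k
            + ((a - s) ^ (k + 1) * Q ^ (k + 1) / a ^ (k + 1)) * s ^ k := by
            rw [hmdef, hMdef, div_pow, div_pow, mul_pow, mul_pow]
        _ = Q ^ (k + 1) * (s ^ k * (a - s) ^ k) * (s + (a - s)) / a ^ (k + 1) := by ring
        _ = Q ^ (k + 1) * (s ^ k * (a - s) ^ k) * a / a ^ (k + 1) := by
            rw [show s + (a - s) = a by ring]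
        _ = (1 - δ) * a ^ k * (s ^ k * (a - s) ^ k) * a / a ^ (k + 1) := by rw [hQN]
        _ = (1 - δ) * (s ^ k * (a - s) ^ k) := by
            field_simp
            ring
    have hsum : (m ^ N + N * m ^ (N - 1) * d + d ^ N) * (a - s) ^ (N - 1)
        + (M ^ N - N * M ^ (N - 1) * d) * s ^ (N - 1)
        ≤ s ^ (N - 1) * (a - s) ^ (N - 1) := by
      calc (m ^ N + N * m ^ (N - 1) * d + d ^ N) * (a - s) ^ (N - 1)
          + (M ^ N - N * M ^ (N - 1) * d) * s ^ (N - 1)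
          ≤ (s ^ (N - 1) * A) * (a - s) ^ (N - 1) + ((a - s) ^ (N - 1) * B) * s ^ (N - 1) :=
            add_le_add (mul_le_mul_of_nonneg_right (h1.trans hHA) hY.le)
              (mul_le_mul_of_nonneg_right (h2.trans hHB) hX0)
        _ = s ^ (N - 1) * (a - s) ^ (N - 1) * (A + B) := by ring
        _ ≤ s ^ (N - 1) * (a - s) ^ (N - 1) * 1 :=
            mul_le_mul_of_nonneg_left hAB (by positivity)
        _ = s ^ (N - 1) * (a - s) ^ (N - 1) := mul_one _
    have expand : (m ^ N + N * m ^ (N - 1) * d + d ^ N) * (a - s) ^ (N - 1)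
        + (M ^ N - N * M ^ (N - 1) * d) * s ^ (N - 1)
        = (m ^ N * (a - s) ^ (N - 1) + M ^ N * s ^ (N - 1))
          + (N : ℝ) * d * (m ^ (N - 1) * (a - s) ^ (N - 1) - M ^ (N - 1) * s ^ (N - 1))
          + d ^ N * (a - s) ^ (N - 1) := by ring
    rw [expand, identity, cross] at hsum
    simp only [sub_self, mul_zero, add_zero] at hsum
    have hdN : d ^ N * (a - s) ^ (N - 1) ≤ δ * (s ^ (N - 1) * (a - s) ^ (N - 1)) := by
      linarith
    have hdNs : d ^ N ≤ δ * s ^ (N - 1) := by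
      have hh : d ^ N * (a - s) ^ (N - 1) ≤ (δ * s ^ (N - 1)) * (a - s) ^ (N - 1) := by
        calc d ^ N * (a - s) ^ (N - 1) ≤ δ * (s ^ (N - 1) * (a - s) ^ (N - 1)) := hdN
          _ = (δ * s ^ (N - 1)) * (a - s) ^ (N - 1) := by ring
      exact le_of_mul_le_mul_right hh hY
    have h3 : d ^ N ≤ (2 * δ) * s ^ (N - 1) := by
      have := mul_nonneg hδ.le (pow_nonneg hs.le (N - 1))
      linarith
    have hdrw : (d ^ N) ^ (1 / (N : ℝ)) = d := by
      rw [← Real.rpow_natCast d N, ← Real.rpow_mul hd.le]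
      rw [mul_one_div, div_self hNR.ne', Real.rpow_one]
    have hs_rw : (s ^ (N - 1) : ℝ) ^ (1 / (N : ℝ)) = s ^ (((N : ℝ) - 1) / (N : ℝ)) := by
      rw [← Real.rpow_natCast s (N - 1), ← Real.rpow_mul hs.le]
      congr 1
      push_cast [Nat.cast_sub (show 1 ≤ N by omega)]
      rw [mul_one_div]
    have hd2 : d ≤ s ^ (((N : ℝ) - 1) / (N : ℝ)) * (2 * δ) ^ (1 / (N : ℝ)) := by
      calc d = (d ^ N) ^ (1 / (N : ℝ)) := hdrw.symm
        _ ≤ ((2 * δ) * s ^ (N - 1)) ^ (1 / (N : ℝ)) :=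
            Real.rpow_le_rpow (by positivity) h3 (by positivity)
        _ = (2 * δ) ^ (1 / (N : ℝ)) * (s ^ (N - 1) : ℝ) ^ (1 / (N : ℝ)) :=
            Real.mul_rpow (by positivity) (by positivity)
        _ = s ^ (((N : ℝ) - 1) / (N : ℝ)) * (2 * δ) ^ (1 / (N : ℝ)) := by rw [hs_rw]; ring
    have hPmd : P = m + d := by rw [hddef]; ring
    linarith


/-- Lemma 3.4: if `w ∈ E_N`, `w ≥ 0`, the maximum of
`s ↦ w(s)^N/s^{N-1}` over `(0,1]` equals `1 − δ` with `0 < δ < 1/2` and is attained at `a`,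
then `w(s) ≤ s a^{−1/N} + s^{(N−1)/N} (2δ)^{1/N}` for all `s ∈ [0,a]`. -/
theorem bound_left_of_max' (N : ℕ) (hN : 2 ≤ N) (w g : ℝ → ℝ) (hw : MemEN N w g)
    (hwpos : ∀ s ∈ Set.Icc (0:ℝ) 1, 0 ≤ w s)
    (a δ : ℝ) (ha : a ∈ Set.Ioc (0:ℝ) 1) (hδ0 : 0 < δ) (hδ1 : δ < 1/2)
    (hmax : ∀ s ∈ Set.Ioc (0:ℝ) 1, w s ^ N / s ^ (N - 1) ≤ 1 - δ)
    (heq : w a ^ N / a ^ (N - 1) = 1 - δ) :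
    ∀ s ∈ Set.Icc (0:ℝ) a,
      w s ≤ s * a ^ (-(1 / (N : ℝ))) +
        s ^ (((N : ℝ) - 1) / N) * (2 * δ) ^ (1 / (N : ℝ)) := by
  obtain ⟨hweq, hw0, hgint, hgNint, hgN1⟩ := hw
  have ha0 : 0 < a := ha.1
  have ha1 : a ≤ 1 := ha.2
  have hNR : (0 : ℝ) < N := by positivity
  have hQN : w a ^ N = (1 - δ) * a ^ (N - 1) := by
    rw [← heq]
    field_simp
  have hQ0 : 0 ≤ w a := hwpos a ⟨ha0.le, ha1⟩
  have hQa : w a ≤ a ^ (((N : ℝ) - 1) / (N : ℝ)) := Q_le_rpow N hN ha0 hδ0.le hQ0 hQN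
  intro s hs
  obtain ⟨hs0, hsa⟩ := hs
  rcases eq_or_lt_of_le hs0 with h0 | hs0'
  · -- s = 0
    have h2N : (2:ℝ) ≤ (N:ℝ) := by exact_mod_cast hN
    rw [← h0, hw0, Real.zero_rpow (ne_of_gt (div_pos (by linarith) hNR)), zero_mul, zero_mul,
      zero_add]
  · -- 0 < s
    have hs1 : s ≤ 1 := hsa.trans ha1
    have hP0 : 0 ≤ w s := hwpos s ⟨hs0'.le, hs1⟩
    have hPN : w s ^ N ≤ (1 - δ) * s ^ (N - 1) := by
      have h := hmax s ⟨hs0', hs1⟩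
      rwa [div_le_iff₀ (pow_pos hs0' _)] at h
    have hPQ : w s ≤ w a := by
      refine (pow_le_pow_iff_left₀ (n := N) hP0 hQ0 (by omega)).1 ?_
      rw [hQN]
      have h1 : s ^ (N - 1) ≤ a ^ (N - 1) := pow_le_pow_left₀ hs0'.le hsa _
      nlinarith [pow_nonneg hs0'.le (N - 1)]
    rcases eq_or_lt_of_le hsa with hseq | hslt
    · -- s = a
      subst hseq
      have h2 : 0 ≤ s ^ (((N : ℝ) - 1) / (N : ℝ)) * (2 * δ) ^ (1 / (N : ℝ)) := by positivity
      have h3 : s * s ^ (-(1 / (N : ℝ))) = s ^ (((N : ℝ) - 1) / (N : ℝ)) := by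
        nth_rewrite 1 [show s = s ^ (1 : ℝ) by rw [Real.rpow_one]]
        rw [← Real.rpow_add hs0']
        congr 1
        field_simp
        ring
      calc w s ≤ s ^ (((N : ℝ) - 1) / (N : ℝ)) := hQa
        _ = s * s ^ (-(1 / (N : ℝ))) := h3.symm
        _ ≤ s * s ^ (-(1 / (N : ℝ)))
            + s ^ (((N : ℝ) - 1) / (N : ℝ)) * (2 * δ) ^ (1 / (N : ℝ)) := by linarith
    · -- s < a
      -- integrability facts
      have hint0s : IntervalIntegrable g volume 0 s := by
        refine hgint.mono_set ?_
        rw [Set.uIcc_of_le hs0'.le, Set.uIcc_of_le zero_le_one]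
        exact Set.Icc_subset_Icc le_rfl hs1
      have hintsa : IntervalIntegrable g volume s a := by
        refine hgint.mono_set ?_
        rw [Set.uIcc_of_le hslt.le, Set.uIcc_of_le zero_le_one]
        exact Set.Icc_subset_Icc hs0'.le ha1
      have hAint : IntegrableOn (fun t => |g t| ^ N) (Set.Ioc 0 s) volume :=
        hgNint.mono_set (Set.Ioc_subset_Ioc le_rfl hs1)
      have hBint : IntegrableOn (fun t => |g t| ^ N) (Set.Ioc s a) volume :=
        hgNint.mono_set (Set.Ioc_subset_Ioc hs0'.le ha1)
      set A := ∫ t in Set.Ioc (0:ℝ) s, |g t| ^ N with hA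
      set B := ∫ t in Set.Ioc s a, |g t| ^ N with hB
      -- Hölder bounds
      have hws : w s = ∫ t in (0:ℝ)..s, g t := hweq s ⟨hs0'.le, hs1⟩
      have hwa : w a = ∫ t in (0:ℝ)..a, g t := hweq a ⟨ha0.le, ha1⟩
      have hHA : w s ^ N ≤ s ^ (N - 1) * A := by
        have h := pow_integral_le N (by omega) g hs0' hint0s hAint
        rwa [sub_zero, ← hws] at h
      have hHB : (w a - w s) ^ N ≤ (a - s) ^ (N - 1) * B := by
        have hadd := intervalIntegral.integral_add_adjacent_intervals hint0s hintsa
        have hdiff : w a - w s = ∫ t in s..a, g t := by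
          rw [hws, hwa, ← hadd]; ring
        have h := pow_integral_le N (by omega) g hslt hintsa hBint
        rwa [← hdiff] at h
      -- A + B ≤ 1
      have hAB : A + B ≤ 1 := by
        have hun : A + B = ∫ t in Set.Ioc (0:ℝ) a, |g t| ^ N := by
          rw [← Set.Ioc_union_Ioc_eq_Ioc hs0'.le hslt.le]
          rw [setIntegral_union (Set.Ioc_disjoint_Ioc_of_le le_rfl) measurableSet_Ioc hAint hBint]
        have hmono : (∫ t in Set.Ioc (0:ℝ) a, |g t| ^ N) ≤ ∫ t in Set.Ioc (0:ℝ) 1, |g t| ^ N := by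
          apply setIntegral_mono_set hgNint
          · exact Eventually.of_forall fun x => by positivity
          · exact HasSubset.Subset.eventuallyLE (Set.Ioc_subset_Ioc le_rfl ha1)
        rw [hun]
        rw [hgN1] at hmono
        exact hmono
      exact key_alg N hN hs0' hslt hP0 hQ0 hPQ hδ0 (by linarith) hHA hHB hAB hQN
end
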